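/- arXiv:2503.14981 — 14 statements merged into one kernel-verified Lean document; each statement's English description precedes it below -/
import Mathlib

section
/- Let 𝔥 be a Euclidean space with spectral decomposition system (𝒳, S, γ, (Λ_a)_{a∈A}) and spectral-induced ordering mapping τ. Then: (i) τ is idempotent, τ ∘ τ = τ; (ii) ‖τ(x)‖ = ‖x‖ for all x ∈ 𝒳; (iii) ⟨x, y⟩ ≤ ⟨τ(x), τ(y)⟩ for all x, y ∈ 𝒳; and (iv) τ is nonexpansive: ‖τ(x) − τ(y)‖ ≤ ‖x − y‖ for all x, y ∈ 𝒳. -/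
open scoped InnerProductSpace

/-- A spectral decomposition system `(𝓧, S, γ, (Λ a)_{a ∈ A})` for a Euclidean space `𝓗`,
with spectral-induced ordering mapping `τ`. -/
structure SpectralDecompositionSystem
    (𝓗 : Type*) (𝓧 : Type*) [NormedAddCommGroup 𝓗] [InnerProductSpace ℝ 𝓗]
    [NormedAddCommGroup 𝓧] [InnerProductSpace ℝ 𝓧]
    (S : Type*) [Group S] [MulAction S 𝓧]
    {A : Type*} (γ : 𝓗 → 𝓧) (Λ : A → 𝓧 →ₗ[ℝ] 𝓗) (τ : 𝓧 → 𝓧) : Prop where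
  /-- `S` acts on `𝓧` by linear maps. -/
  smul_add_smul : ∀ (s : S) (c : ℝ) (x y : 𝓧), s • (c • x + y) = c • (s • x) + s • y
  /-- `S` acts on `𝓧` by isometries. -/
  norm_smul : ∀ (s : S) (x : 𝓧), ‖s • x‖ = ‖x‖
  /-- Each `Λ a` is a (linear) isometry. -/
  norm_lambda : ∀ (a : A) (x : 𝓧), ‖Λ a x‖ = ‖x‖
  /-- `τ` is `S`-invariant. -/
  tau_smul : ∀ (s : S) (x : 𝓧), τ (s • x) = τ x
  /-- `τ x` belongs to the orbit `S • x`. -/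
  tau_orbit : ∀ x : 𝓧, ∃ s : S, τ x = s • x
  /-- `γ ∘ Λ a = τ` for all `a ∈ A`. -/
  gamma_lambda : ∀ (a : A) (x : 𝓧), γ (Λ a x) = τ x
  /-- Every element of `𝓗` admits a spectral decomposition. -/
  exists_decomp : ∀ Z : 𝓗, ∃ a : A, Z = Λ a (γ Z)
  /-- Von Neumann-type trace inequality. -/
  inner_le : ∀ Z W : 𝓗, ⟪Z, W⟫_ℝ ≤ ⟪γ Z, γ W⟫_ℝ

variable {𝓗 𝓧 : Type*} [NormedAddCommGroup 𝓗] [InnerProductSpace ℝ 𝓗]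
  [FiniteDimensional ℝ 𝓗] [NormedAddCommGroup 𝓧] [InnerProductSpace ℝ 𝓧]
  [FiniteDimensional ℝ 𝓧] {S : Type*} [Group S] [MulAction S 𝓧]
  {A : Type*} [Nonempty A]

theorem spectral_ordering_basic_properties
    (γ : 𝓗 → 𝓧) (Λ : A → 𝓧 →ₗ[ℝ] 𝓗) (τ : 𝓧 → 𝓧)
    (hsys : SpectralDecompositionSystem 𝓗 𝓧 S γ Λ τ) :
    τ ∘ τ = τ ∧
    (∀ x : 𝓧, ‖τ x‖ = ‖x‖) ∧
    (∀ x y : 𝓧, ⟪x, y⟫_ℝ ≤ ⟪τ x, τ y⟫_ℝ) ∧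
    (∀ x y : 𝓧, ‖τ x - τ y‖ ≤ ‖x - y‖) := by
  have hnorm : ∀ x : 𝓧, ‖τ x‖ = ‖x‖ := by
    intro x
    obtain ⟨s, hs⟩ := hsys.tau_orbit x
    rw [hs, hsys.norm_smul]
  have hidem : τ ∘ τ = τ := by
    funext x
    obtain ⟨s, hs⟩ := hsys.tau_orbit x
    simp only [Function.comp_apply, hs, hsys.tau_smul]
  have hinner : ∀ x y : 𝓧, ⟪x, y⟫_ℝ ≤ ⟪τ x, τ y⟫_ℝ := by
    intro x y
    obtain ⟨a⟩ := ‹Nonempty A›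
    have h := hsys.inner_le (Λ a x) (Λ a y)
    rw [hsys.gamma_lambda, hsys.gamma_lambda] at h
    have heq : ⟪Λ a x, Λ a y⟫_ℝ = ⟪x, y⟫_ℝ := by
      rw [real_inner_eq_norm_add_mul_self_sub_norm_mul_self_sub_norm_mul_self_div_two,
        real_inner_eq_norm_add_mul_self_sub_norm_mul_self_sub_norm_mul_self_div_two x y,
        ← map_add, hsys.norm_lambda, hsys.norm_lambda, hsys.norm_lambda]
    linarith [heq ▸ h]
  refine ⟨hidem, hnorm, hinner, ?_⟩
  intro x y
  have h1 : ‖τ x - τ y‖ ^ 2 ≤ ‖x - y‖ ^ 2 := by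
    rw [norm_sub_sq_real, norm_sub_sq_real, hnorm, hnorm]
    have := hinner x y
    linarith
  nlinarith [norm_nonneg (τ x - τ y), norm_nonneg (x - y)]
end

section
/- Let 𝔥 be a Euclidean space with spectral decomposition system (𝒳, S, γ, (Λ_a)_{a∈A}) and spectral-induced ordering mapping τ, and let x, y ∈ 𝒳. Then ⟨τ(x), τ(y)⟩ is the greatest element of the set {⟨s • x, y⟩ : s ∈ S}; in particular ⟨τ(x), τ(y)⟩ = max_{s∈S} ⟨s • x, y⟩ and this maximum is attained. -/
open scoped InnerProductSpace

variable {𝓗 𝓧 : Type*} [NormedAddCommGroup 𝓗] [InnerProductSpace ℝ 𝓗]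
  [FiniteDimensional ℝ 𝓗] [NormedAddCommGroup 𝓧] [InnerProductSpace ℝ 𝓧]
  [FiniteDimensional ℝ 𝓧] {S : Type*} [Group S] [MulAction S 𝓧]
  {A : Type*} [Nonempty A]

theorem inner_tau_tau_isGreatest
    (γ : 𝓗 → 𝓧) (Λ : A → 𝓧 →ₗ[ℝ] 𝓗) (τ : 𝓧 → 𝓧)
    (hsys : SpectralDecompositionSystem 𝓗 𝓧 S γ Λ τ)
    (x y : 𝓧) :
    IsGreatest (Set.range fun s : S => ⟪s • x, y⟫_ℝ) ⟪τ x, τ y⟫_ℝ := by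

  -- Preliminary facts
  have hadd : ∀ (s : S) (u v : 𝓧), s • (u + v) = s • u + s • v := by
    intro s u v
    simpa using hsys.smul_add_smul s 1 u v
  have hsub : ∀ (s : S) (u v : 𝓧), s • (u - v) = s • u - s • v := by
    intro s u v
    have := hsys.smul_add_smul s (-1) v u
    simp only [neg_one_smul] at this
    calc s • (u - v) = s • (-v + u) := by rw [neg_add_eq_sub]
      _ = -(s • v) + s • u := this
      _ = s • u - s • v := by abel
  -- group action preserves inner product
  have hinner_smul : ∀ (s : S) (u v : 𝓧), ⟪s • u, s • v⟫_ℝ = ⟪u, v⟫_ℝ := by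
    intro s u v
    rw [real_inner_eq_norm_add_mul_self_sub_norm_mul_self_sub_norm_mul_self_div_two,
      real_inner_eq_norm_add_mul_self_sub_norm_mul_self_sub_norm_mul_self_div_two u v,
      ← hadd s u v, hsys.norm_smul, hsys.norm_smul, hsys.norm_smul]
  -- Λ a preserves inner product
  have hinner_lam : ∀ (a : A) (u v : 𝓧), ⟪Λ a u, Λ a v⟫_ℝ = ⟪u, v⟫_ℝ := by
    intro a u v
    rw [real_inner_eq_norm_add_mul_self_sub_norm_mul_self_sub_norm_mul_self_div_two,
      real_inner_eq_norm_add_mul_self_sub_norm_mul_self_sub_norm_mul_self_div_two u v,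
      ← map_add, hsys.norm_lambda, hsys.norm_lambda, hsys.norm_lambda]
  -- key inequality: ⟪u, v⟫ ≤ ⟪τ u, τ v⟫
  have hkey : ∀ u v : 𝓧, ⟪u, v⟫_ℝ ≤ ⟪τ u, τ v⟫_ℝ := by
    intro u v
    obtain ⟨a⟩ := ‹Nonempty A›
    have h := hsys.inner_le (Λ a u) (Λ a v)
    rwa [hinner_lam, hsys.gamma_lambda, hsys.gamma_lambda] at h
  constructor
  · -- membership
    obtain ⟨s, hs⟩ := hsys.tau_orbit x
    obtain ⟨t, ht⟩ := hsys.tau_orbit y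
    refine ⟨t⁻¹ * s, ?_⟩
    have : ⟪(t⁻¹ * s) • x, y⟫_ℝ = ⟪t • ((t⁻¹ * s) • x), t • y⟫_ℝ :=
      (hinner_smul t _ _).symm
    show ⟪(t⁻¹ * s) • x, y⟫_ℝ = ⟪τ x, τ y⟫_ℝ
    rw [this, ← mul_smul, mul_inv_cancel_left, ← hs, ← ht]
  · rintro r ⟨s, rfl⟩
    have h := hkey (s • x) y
    rwa [hsys.tau_smul] at h
end

section
/- Let 𝔥 be a Euclidean space with spectral decomposition system (𝒳, S, γ, (Λ_a)_{a∈A}) and spectral-induced ordering mapping τ. Then the range of τ is a closed convex cone in 𝒳, and for every x ∈ 𝒳 the orbit S • x = {s • x : s ∈ S} is a compact subset of 𝒳. -/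
open scoped InnerProductSpace

variable {𝓗 𝓧 : Type*} [NormedAddCommGroup 𝓗] [InnerProductSpace ℝ 𝓗]
  [FiniteDimensional ℝ 𝓗] [NormedAddCommGroup 𝓧] [InnerProductSpace ℝ 𝓧]
  [FiniteDimensional ℝ 𝓧] {S : Type*} [Group S] [MulAction S 𝓧]
  {A : Type*} [Nonempty A]

section Aux

variable {γ : 𝓗 → 𝓧} {Λ : A → 𝓧 →ₗ[ℝ] 𝓗} {τ : 𝓧 → 𝓧}

namespace SpectralDecompositionSystem

variable (hsys : SpectralDecompositionSystem 𝓗 𝓧 S γ Λ τ)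
include hsys

lemma sds_smul_zero (s : S) : s • (0 : 𝓧) = 0 := by
  have h := hsys.smul_add_smul s 1 0 0
  simp only [one_smul, add_zero] at h
  exact (left_eq_add.mp h)

lemma sds_smul_add (s : S) (x y : 𝓧) : s • (x + y) = s • x + s • y := by
  have h := hsys.smul_add_smul s 1 x y
  simpa using h

lemma sds_smul_smul (s : S) (c : ℝ) (x : 𝓧) : s • (c • x) = c • (s • x) := by
  have h := hsys.smul_add_smul s c x 0
  simpa [hsys.sds_smul_zero s] using h

lemma sds_smul_sub (s : S) (x y : 𝓧) : s • (x - y) = s • x - s • y := by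
  have h := hsys.smul_add_smul s (-1) y x
  rw [neg_one_smul, neg_one_smul] at h
  rw [sub_eq_neg_add, h]
  abel

/-- The group action preserves the inner product. -/
lemma sds_inner_smul (s : S) (u v : 𝓧) : ⟪s • u, s • v⟫_ℝ = ⟪u, v⟫_ℝ := by
  rw [real_inner_eq_norm_add_mul_self_sub_norm_mul_self_sub_norm_mul_self_div_two,
    real_inner_eq_norm_add_mul_self_sub_norm_mul_self_sub_norm_mul_self_div_two u v,
    ← hsys.sds_smul_add s u v, hsys.norm_smul, hsys.norm_smul, hsys.norm_smul]

/-- Each `Λ a` preserves the inner product. -/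
lemma sds_inner_lambda (a : A) (u v : 𝓧) : ⟪Λ a u, Λ a v⟫_ℝ = ⟪u, v⟫_ℝ := by
  rw [real_inner_eq_norm_add_mul_self_sub_norm_mul_self_sub_norm_mul_self_div_two,
    real_inner_eq_norm_add_mul_self_sub_norm_mul_self_sub_norm_mul_self_div_two u v,
    ← map_add, hsys.norm_lambda, hsys.norm_lambda, hsys.norm_lambda]

lemma sds_norm_tau (x : 𝓧) : ‖τ x‖ = ‖x‖ := by
  obtain ⟨s, hs⟩ := hsys.tau_orbit x
  rw [hs, hsys.norm_smul]

/-- The key inequality: `⟪s • x, t • y⟫ ≤ ⟪τ x, τ y⟫`. -/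
lemma sds_key (s t : S) (x y : 𝓧) : ⟪s • x, t • y⟫_ℝ ≤ ⟪τ x, τ y⟫_ℝ := by
  obtain ⟨a⟩ := ‹Nonempty A›
  calc ⟪s • x, t • y⟫_ℝ = ⟪Λ a (s • x), Λ a (t • y)⟫_ℝ :=
        (hsys.sds_inner_lambda a _ _).symm
    _ ≤ ⟪γ (Λ a (s • x)), γ (Λ a (t • y))⟫_ℝ := hsys.inner_le _ _
    _ = ⟪τ x, τ y⟫_ℝ := by
        rw [hsys.gamma_lambda, hsys.gamma_lambda, hsys.tau_smul, hsys.tau_smul]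

lemma sds_inner_le_tau (x y : 𝓧) : ⟪x, y⟫_ℝ ≤ ⟪τ x, τ y⟫_ℝ := by
  simpa using hsys.sds_key 1 1 x y

omit hsys in
lemma sds_eq_of_norm_eq_of_le {u v : 𝓧} (h : ‖u‖ = ‖v‖) (h2 : ‖v‖ ^ 2 ≤ ⟪u, v⟫_ℝ) :
    u = v := by
  have hu2 : ‖u‖ ^ 2 = ‖v‖ ^ 2 := by rw [h]
  have h3 : ‖u - v‖ ^ 2 ≤ 0 := by linarith [norm_sub_sq_real u v]
  have h4 : ‖u - v‖ = 0 := by nlinarith [norm_nonneg (u - v)]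
  exact sub_eq_zero.mp (norm_eq_zero.mp h4)

lemma sds_mem_range_iff {x : 𝓧} : x ∈ Set.range τ ↔ τ x = x := by
  constructor
  · rintro ⟨y, rfl⟩
    obtain ⟨s, hs⟩ := hsys.tau_orbit y
    rw [hs, hsys.tau_smul, ← hs]
  · intro h; exact ⟨x, h⟩

/-- If `⟪τ x, x⟫ ≥ ‖x‖²`, then `τ x = x`. -/
lemma sds_tau_eq_self {x : 𝓧} (h : ‖x‖ ^ 2 ≤ ⟪τ x, x⟫_ℝ) : τ x = x :=
  sds_eq_of_norm_eq_of_le (hsys.sds_norm_tau x) h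

end SpectralDecompositionSystem

end Aux

theorem range_tau_closedConvexCone_and_orbit_compact
    (γ : 𝓗 → 𝓧) (Λ : A → 𝓧 →ₗ[ℝ] 𝓗) (τ : 𝓧 → 𝓧)
    (hsys : SpectralDecompositionSystem 𝓗 𝓧 S γ Λ τ) :
    IsClosed (Set.range τ) ∧
    (∀ u ∈ Set.range τ, ∀ v ∈ Set.range τ, u + v ∈ Set.range τ) ∧
    (∀ c : ℝ, 0 ≤ c → ∀ u ∈ Set.range τ, c • u ∈ Set.range τ) ∧
    (∀ x : 𝓧, IsCompact (MulAction.orbit S x)) := by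
  obtain ⟨a⟩ := ‹Nonempty A›
  refine ⟨?_, ?_, ?_, ?_⟩
  · -- closedness
    refine isClosed_of_closure_subset fun x hx => ?_
    have hsub : Set.range τ ⊆ {y | 0 ≤ ⟪τ x - x, y⟫_ℝ} := by
      intro y hy
      have hty : τ y = y := hsys.sds_mem_range_iff.mp hy
      have := hsys.sds_inner_le_tau x y
      rw [hty] at this
      simp only [Set.mem_setOf_eq, inner_sub_left]
      linarith
    have hcl : IsClosed {y : 𝓧 | 0 ≤ ⟪τ x - x, y⟫_ℝ} :=
      isClosed_le continuous_const (Continuous.inner continuous_const continuous_id)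
    have hx' : x ∈ {y : 𝓧 | 0 ≤ ⟪τ x - x, y⟫_ℝ} :=
      hcl.closure_subset ((closure_mono hsub) hx)
    have : ‖x‖ ^ 2 ≤ ⟪τ x, x⟫_ℝ := by
      simp only [Set.mem_setOf_eq, inner_sub_left, real_inner_self_eq_norm_sq] at hx'
      linarith
    exact hsys.sds_mem_range_iff.mpr (hsys.sds_tau_eq_self this)
  · -- addition
    intro u hu v hv
    have hu' : τ u = u := hsys.sds_mem_range_iff.mp hu
    have hv' : τ v = v := hsys.sds_mem_range_iff.mp hv
    refine hsys.sds_mem_range_iff.mpr (hsys.sds_tau_eq_self ?_)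
    have h1 : ⟪u + v, u⟫_ℝ ≤ ⟪τ (u + v), u⟫_ℝ := by
      have := hsys.sds_inner_le_tau (u + v) u
      rwa [hu'] at this
    have h2 : ⟪u + v, v⟫_ℝ ≤ ⟪τ (u + v), v⟫_ℝ := by
      have := hsys.sds_inner_le_tau (u + v) v
      rwa [hv'] at this
    have : ⟪u + v, u + v⟫_ℝ ≤ ⟪τ (u + v), u + v⟫_ℝ := by
      rw [inner_add_right, inner_add_right]
      linarith
    rwa [real_inner_self_eq_norm_sq] at this
  · -- scalar multiplication
    intro c hc u hu
    have hu' : τ u = u := hsys.sds_mem_range_iff.mp hu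
    refine hsys.sds_mem_range_iff.mpr (hsys.sds_tau_eq_self ?_)
    have h1 : ⟪c • u, u⟫_ℝ ≤ ⟪τ (c • u), u⟫_ℝ := by
      have := hsys.sds_inner_le_tau (c • u) u
      rwa [hu'] at this
    have : ⟪c • u, c • u⟫_ℝ ≤ ⟪τ (c • u), c • u⟫_ℝ := by
      rw [real_inner_smul_right, real_inner_smul_right]
      exact mul_le_mul_of_nonneg_left h1 hc
    rwa [real_inner_self_eq_norm_sq] at this
  · -- orbit compactness
    intro x
    have horb : MulAction.orbit S x =
        {z : 𝓧 | ‖z‖ = ‖x‖ ∧ ⟪τ z, τ x⟫_ℝ = ‖x‖ ^ 2} := by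
      ext z
      constructor
      · rintro ⟨s, rfl⟩
        refine ⟨hsys.norm_smul s x, ?_⟩
        rw [hsys.tau_smul, real_inner_self_eq_norm_sq, hsys.sds_norm_tau]
      · rintro ⟨hz, hip⟩
        have hnz : ‖τ z‖ = ‖τ x‖ := by
          rw [hsys.sds_norm_tau, hsys.sds_norm_tau, hz]
        have : τ z = τ x := by
          refine SpectralDecompositionSystem.sds_eq_of_norm_eq_of_le hnz ?_
          rw [hip, hsys.sds_norm_tau]
        obtain ⟨s, hs⟩ := hsys.tau_orbit z
        obtain ⟨t, ht⟩ := hsys.tau_orbit x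
        have hzx : s • z = t • x := by rw [← hs, ← ht, this]
        refine ⟨s⁻¹ * t, ?_⟩
        show (s⁻¹ * t) • x = z
        rw [mul_smul, ← hzx, inv_smul_smul]
    rw [horb]
    refine Metric.isCompact_of_isClosed_isBounded ?_ ?_
    · -- closed: intersection of two closed sets
      have hLip : LipschitzWith ‖x‖₊ (fun z : 𝓧 => ⟪τ z, τ x⟫_ℝ) := by
        refine LipschitzWith.of_dist_le_mul fun z w => ?_
        rw [Real.dist_eq, dist_eq_norm]
        have key : ∀ z w : 𝓧, ⟪τ z, τ x⟫_ℝ - ⟪τ w, τ x⟫_ℝ ≤ ‖x‖ * ‖z - w‖ := by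
          intro z w
          obtain ⟨s, hs⟩ := hsys.tau_orbit z
          obtain ⟨t, ht⟩ := hsys.tau_orbit x
          have hge : ⟪s • w, t • x⟫_ℝ ≤ ⟪τ w, τ x⟫_ℝ := hsys.sds_key s t w x
          have heq : ⟪τ z, τ x⟫_ℝ = ⟪s • z, t • x⟫_ℝ := by rw [hs, ht]
          have hsub : ⟪s • z, t • x⟫_ℝ - ⟪s • w, t • x⟫_ℝ = ⟪s • (z - w), t • x⟫_ℝ := by
            rw [hsys.sds_smul_sub, inner_sub_left]
          have hcs : ⟪s • (z - w), t • x⟫_ℝ ≤ ‖s • (z - w)‖ * ‖t • x‖ :=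
            real_inner_le_norm _ _
          rw [hsys.norm_smul, hsys.norm_smul] at hcs
          calc ⟪τ z, τ x⟫_ℝ - ⟪τ w, τ x⟫_ℝ ≤ ⟪s • z, t • x⟫_ℝ - ⟪s • w, t • x⟫_ℝ := by
                rw [heq]; linarith
            _ = ⟪s • (z - w), t • x⟫_ℝ := hsub
            _ ≤ ‖z - w‖ * ‖x‖ := hcs
            _ = ‖x‖ * ‖z - w‖ := mul_comm _ _
        have k1 := key z w
        have k2 := key w z
        rw [norm_sub_rev] at k2
        have hn : (‖x‖₊ : ℝ) = ‖x‖ := rfl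
        rw [hn, abs_le]
        exact ⟨by linarith, k1⟩
      have hc1 : IsClosed {z : 𝓧 | ‖z‖ = ‖x‖} :=
        isClosed_eq continuous_norm continuous_const
      have hc2 : IsClosed {z : 𝓧 | ⟪τ z, τ x⟫_ℝ = ‖x‖ ^ 2} :=
        isClosed_eq hLip.continuous continuous_const
      exact hc1.inter hc2
    · -- bounded
      refine (Metric.isBounded_iff_subset_closedBall 0).mpr ⟨‖x‖, fun z hz => ?_⟩
      simp only [Metric.mem_closedBall, dist_zero_right]
      exact le_of_eq hz.1
end

section
/- Let 𝔥 be a Euclidean space with spectral decomposition system (𝒳, S, γ, (Λ_a)_{a∈A}) and spectral-induced ordering mapping τ. Then: (i) τ ∘ γ = γ and γ ∘ Λ_a ∘ γ = γ for every a ∈ A; (ii) the range of γ equals the range of τ (hence is a closed convex cone in 𝒳); (iii) ‖X‖ = ‖γ(X)‖ for every X ∈ 𝔥; (iv) γ is nonexpansive: ‖γ(X) − γ(Y)‖ ≤ ‖X − Y‖ for all X, Y ∈ 𝔥; (v) γ(αX) = α γ(X) for every X ∈ 𝔥 and every real α ≥ 0; and (vi) γ(−X) ∈ −(S • γ(X))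 for every X ∈ 𝔥. -/
open scoped InnerProductSpace

variable {𝓗 𝓧 : Type*} [NormedAddCommGroup 𝓗] [InnerProductSpace ℝ 𝓗]
  [FiniteDimensional ℝ 𝓗] [NormedAddCommGroup 𝓧] [InnerProductSpace ℝ 𝓧]
  [FiniteDimensional ℝ 𝓧] {S : Type*} [Group S] [MulAction S 𝓧]
  {A : Type*} [Nonempty A]

theorem spectral_mapping_basic_properties
    (γ : 𝓗 → 𝓧) (Λ : A → 𝓧 →ₗ[ℝ] 𝓗) (τ : 𝓧 → 𝓧)
    (hsys : SpectralDecompositionSystem 𝓗 𝓧 S γ Λ τ) :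
    (∀ Z : 𝓗, τ (γ Z) = γ Z) ∧
    (∀ (a : A) (Z : 𝓗), γ (Λ a (γ Z)) = γ Z) ∧
    Set.range γ = Set.range τ ∧
    IsClosed (Set.range γ) ∧
    (∀ u ∈ Set.range γ, ∀ v ∈ Set.range γ, u + v ∈ Set.range γ) ∧
    (∀ c : ℝ, 0 ≤ c → ∀ u ∈ Set.range γ, c • u ∈ Set.range γ) ∧
    (∀ Z : 𝓗, ‖Z‖ = ‖γ Z‖) ∧
    (∀ Z W : 𝓗, ‖γ Z - γ W‖ ≤ ‖Z - W‖) ∧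
    (∀ (Z : 𝓗) (α : ℝ), 0 ≤ α → γ (α • Z) = α • γ Z) ∧
    (∀ Z : 𝓗, ∃ s : S, γ (-Z) = -(s • γ Z)) := by

  obtain ⟨hS, hSn, hΛn, hτs, hτo, hγΛ, hdec, hin⟩ := hsys
  have a₀ : A := Classical.arbitrary A
  -- inner products preserved by Λ a
  have hΛi : ∀ (a : A) (x y : 𝓧), ⟪Λ a x, Λ a y⟫_ℝ = ⟪x, y⟫_ℝ := fun a x y =>
    (LinearIsometry.mk (Λ a) (hΛn a)).inner_map_map x y
  -- (i) τ ∘ γ = γ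
  have hτγ : ∀ Z : 𝓗, τ (γ Z) = γ Z := by
    intro Z
    obtain ⟨a, ha⟩ := hdec Z
    rw [← hγΛ a, ← ha]
  have hγΛγ : ∀ (a : A) (Z : 𝓗), γ (Λ a (γ Z)) = γ Z := fun a Z =>
    (hγΛ a (γ Z)).trans (hτγ Z)
  -- (iii) norm preservation
  have hnorm : ∀ Z : 𝓗, ‖Z‖ = ‖γ Z‖ := by
    intro Z
    obtain ⟨a, ha⟩ := hdec Z
    conv_lhs => rw [ha]
    rw [hΛn]
  -- (iv) nonexpansiveness
  have hnonexp : ∀ Z W : 𝓗, ‖γ Z - γ W‖ ≤ ‖Z - W‖ := by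
    intro Z W
    have key : ‖γ Z - γ W‖ ^ 2 ≤ ‖Z - W‖ ^ 2 := by
      rw [norm_sub_sq_real, norm_sub_sq_real, ← hnorm Z, ← hnorm W]
      linarith [hin Z W]
    nlinarith [norm_nonneg (Z - W), norm_nonneg (γ Z - γ W)]
  -- (v) positive homogeneity
  have hhom : ∀ (Z : 𝓗) (α : ℝ), 0 ≤ α → γ (α • Z) = α • γ Z := by
    intro Z α hα
    have h1 : ⟪α • Z, Z⟫_ℝ ≤ ⟪γ (α • Z), γ Z⟫_ℝ := hin (α • Z) Z
    have h2 : ‖γ (α • Z)‖ = α * ‖Z‖ := by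
      rw [← hnorm, norm_smul, Real.norm_eq_abs, abs_of_nonneg hα]
    have h3 : ⟪α • Z, Z⟫_ℝ = α * ‖Z‖ ^ 2 := by
      rw [real_inner_smul_left, real_inner_self_eq_norm_sq]
    have h4 : α * ‖Z‖ ^ 2 ≤ ⟪γ (α • Z), γ Z⟫_ℝ := by rw [← h3]; exact h1
    have key : ‖γ (α • Z) - α • γ Z‖ ^ 2 ≤ 0 := by
      rw [norm_sub_sq_real, real_inner_smul_right, norm_smul, Real.norm_eq_abs,
        abs_of_nonneg hα, h2, ← hnorm Z]
      nlinarith [mul_le_mul_of_nonneg_left h4 hα]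
    have : γ (α • Z) - α • γ Z = 0 := by
      have := le_antisymm key (sq_nonneg _)
      simpa [pow_eq_zero_iff, sub_eq_zero] using this
    exact sub_eq_zero.mp this
  -- s • 0 = 0 and s • (-x) = -(s • x)
  have hs0 : ∀ s : S, s • (0 : 𝓧) = 0 := by
    intro s
    have h := hS s 1 0 0
    simp only [one_smul, add_zero] at h
    nth_rewrite 1 [← add_zero (s • (0 : 𝓧))] at h
    exact (add_left_cancel h).symm
  have hneg : ∀ (s : S) (x : 𝓧), s • (-x) = -(s • x) := by
    intro s x
    have h := hS s (-1) x 0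
    simpa [hs0 s, neg_one_smul] using h
  -- (ii) range γ = range τ
  have hrange : Set.range γ = Set.range τ := by
    ext x
    constructor
    · rintro ⟨Z, rfl⟩
      exact ⟨γ Z, hτγ Z⟩
    · rintro ⟨y, rfl⟩
      exact ⟨Λ a₀ y, hγΛ a₀ y⟩
  -- closedness
  have hcont : Continuous γ := by
    have hlip : LipschitzWith 1 γ := LipschitzWith.of_dist_le_mul fun Z W => by
      simpa [dist_eq_norm] using hnonexp Z W
    exact hlip.continuous
  have hclosed : IsClosed (Set.range γ) := by
    have hset : Set.range γ = {x : 𝓧 | γ (Λ a₀ x) = x} := by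
      ext x
      constructor
      · rintro ⟨Z, rfl⟩
        exact hγΛγ a₀ Z
      · intro hx
        exact ⟨Λ a₀ x, hx⟩
    rw [hset]
    exact isClosed_eq (hcont.comp (Λ a₀).continuous_of_finiteDimensional) continuous_id
  -- closure under addition
  have hadd : ∀ u ∈ Set.range γ, ∀ v ∈ Set.range γ, u + v ∈ Set.range γ := by
    rintro u ⟨Z, rfl⟩ v ⟨W, rfl⟩
    set u := γ Z with hu
    set v := γ W with hv
    set U := Λ a₀ (u + v) with hU
    have hiu : ⟪u + v, u⟫_ℝ ≤ ⟪γ U, u⟫_ℝ := by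
      have h := hin U (Λ a₀ u)
      rwa [hΛi, hγΛ a₀ u, hu, hτγ Z, ← hu] at h
    have hiv : ⟪u + v, v⟫_ℝ ≤ ⟪γ U, v⟫_ℝ := by
      have h := hin U (Λ a₀ v)
      rwa [hΛi, hγΛ a₀ v, hv, hτγ W, ← hv] at h
    have hnU : ‖γ U‖ = ‖u + v‖ := by rw [← hnorm, hU, hΛn]
    have key : ‖γ U - (u + v)‖ ^ 2 ≤ 0 := by
      rw [norm_sub_sq_real, inner_add_right]
      have hself : ⟪u + v, u⟫_ℝ + ⟪u + v, v⟫_ℝ = ‖u + v‖ ^ 2 := by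
        rw [← inner_add_right, real_inner_self_eq_norm_sq]
      rw [hnU]
      linarith
    have : γ U = u + v := by
      have := le_antisymm key (sq_nonneg _)
      have h0 : γ U - (u + v) = 0 := by
        simpa [pow_eq_zero_iff, sub_eq_zero] using this
      exact sub_eq_zero.mp h0
    exact ⟨U, this⟩
  -- (vi)
  have hneg' : ∀ Z : 𝓗, ∃ s : S, γ (-Z) = -(s • γ Z) := by
    intro Z
    obtain ⟨a, ha⟩ := hdec Z
    obtain ⟨s, hs⟩ := hτo (-(γ Z))
    refine ⟨s, ?_⟩
    have hZ : -Z = Λ a (-(γ Z)) := by rw [map_neg, ← ha]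
    rw [hZ, hγΛ, hs, hneg]
  refine ⟨hτγ, hγΛγ, hrange, hclosed, hadd, ?_, hnorm, hnonexp, hhom, hneg'⟩
  rintro c hc u ⟨Z, rfl⟩
  exact ⟨c • Z, hhom Z c hc⟩
end

section
/- Let 𝔥 be a Euclidean space with spectral decomposition system (𝒳, S, γ, (Λ_a)_{a∈A}), and let 𝒟 be a nonempty subset of 𝔥. Then the following are equivalent: (i) ⟨X, Y⟩ = ⟨γ(X), γ(Y)⟩ for all X, Y ∈ 𝒟; (ii) ‖X − Y‖ = ‖γ(X) − γ(Y)‖ for all X, Y ∈ 𝒟; (iii) there exists a ∈ A such that X = Λ_a(γ(X)) for every X ∈ 𝒟. -/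
open scoped InnerProductSpace

variable {𝓗 𝓧 : Type*} [NormedAddCommGroup 𝓗] [InnerProductSpace ℝ 𝓗]
  [FiniteDimensional ℝ 𝓗] [NormedAddCommGroup 𝓧] [InnerProductSpace ℝ 𝓧]
  [FiniteDimensional ℝ 𝓧] {S : Type*} [Group S] [MulAction S 𝓧]
  {A : Type*} [Nonempty A]

theorem equality_in_trace_inequality_tfae
    (γ : 𝓗 → 𝓧) (Λ : A → 𝓧 →ₗ[ℝ] 𝓗) (τ : 𝓧 → 𝓧)
    (hsys : SpectralDecompositionSystem 𝓗 𝓧 S γ Λ τ)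
    (𝒟 : Set 𝓗) (h𝒟 : 𝒟.Nonempty) :
    ((∀ Z ∈ 𝒟, ∀ W ∈ 𝒟, ⟪Z, W⟫_ℝ = ⟪γ Z, γ W⟫_ℝ) ↔
      (∀ Z ∈ 𝒟, ∀ W ∈ 𝒟, ‖Z - W‖ = ‖γ Z - γ W‖)) ∧
    ((∀ Z ∈ 𝒟, ∀ W ∈ 𝒟, ⟪Z, W⟫_ℝ = ⟪γ Z, γ W⟫_ℝ) ↔
      (∃ a : A, ∀ Z ∈ 𝒟, Z = Λ a (γ Z))) := by
  classical
  -- Λ a preserves inner products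
  have hΛi : ∀ (a : A) (x y : 𝓧), ⟪Λ a x, Λ a y⟫_ℝ = ⟪x, y⟫_ℝ :=
    fun a x y => (⟨Λ a, hsys.norm_lambda a⟩ : 𝓧 →ₗᵢ[ℝ] 𝓗).inner_map_map x y
  -- γ preserves norms
  have hnorm : ∀ Z : 𝓗, ‖γ Z‖ = ‖Z‖ := by
    intro Z
    obtain ⟨a, ha⟩ := hsys.exists_decomp Z
    conv_rhs => rw [ha, hsys.norm_lambda]
  -- γ takes values in the fixed points of τ
  have hfix : ∀ Z : 𝓗, τ (γ Z) = γ Z := by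
    intro Z
    obtain ⟨a, ha⟩ := hsys.exists_decomp Z
    conv_rhs => rw [ha, hsys.gamma_lambda]
  have hγΛ : ∀ (a : A) (Z : 𝓗), γ (Λ a (γ Z)) = γ Z := by
    intro a Z; rw [hsys.gamma_lambda, hfix]
  -- (i) → (iii)
  have main : (∀ Z ∈ 𝒟, ∀ W ∈ 𝒟, ⟪Z, W⟫_ℝ = ⟪γ Z, γ W⟫_ℝ) →
      ∃ a : A, ∀ Z ∈ 𝒟, Z = Λ a (γ Z) := by
    intro hD
    -- step 1: the finite case
    have key : ∀ F : Finset 𝓗, ↑F ⊆ 𝒟 → ∃ a : A, ∀ Z ∈ F, Z = Λ a (γ Z) := by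
      intro F hF
      set Y : 𝓗 := ∑ Z ∈ F, Z with hY
      set g : 𝓧 := ∑ Z ∈ F, γ Z with hg
      have hYY : ⟪Y, Y⟫_ℝ = ⟪g, g⟫_ℝ := by
        rw [hY, hg, inner_sum, inner_sum]
        refine Finset.sum_congr rfl fun W hW => ?_
        rw [sum_inner, sum_inner]
        exact Finset.sum_congr rfl fun Z hZ => hD Z (hF hZ) W (hF hW)
      have hge : ⟪Y, Y⟫_ℝ ≤ ⟪γ Y, g⟫_ℝ := by
        calc ⟪Y, Y⟫_ℝ = ∑ Z ∈ F, ⟪Y, Z⟫_ℝ := by rw [hY, inner_sum]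
          _ ≤ ∑ Z ∈ F, ⟪γ Y, γ Z⟫_ℝ := Finset.sum_le_sum fun Z _ => hsys.inner_le Y Z
          _ = ⟪γ Y, g⟫_ℝ := by rw [hg, inner_sum]
      have hγY : γ Y = g := by
        have h0 : ‖γ Y - g‖ ^ 2 ≤ 0 := by
          have e1 : ‖γ Y‖ ^ 2 = ⟪Y, Y⟫_ℝ := by rw [hnorm, real_inner_self_eq_norm_sq]
          have e2 : ‖g‖ ^ 2 = ⟪Y, Y⟫_ℝ := by rw [← real_inner_self_eq_norm_sq, ← hYY]
          rw [norm_sub_sq_real]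
          linarith
        have h1 : ‖γ Y - g‖ ^ 2 = 0 := le_antisymm h0 (sq_nonneg _)
        have h2 : γ Y - g = 0 := by
          have := pow_eq_zero_iff (n := 2) (by norm_num) |>.mp h1
          exact norm_eq_zero.mp this
        exact sub_eq_zero.mp h2
      obtain ⟨a, ha⟩ := hsys.exists_decomp Y
      have hWsum : ∑ Z ∈ F, Λ a (γ Z) = Y := by
        rw [← map_sum, ← hg, ← hγY, ← ha]
      have hterm : ∀ Z' ∈ F, ∀ Z ∈ F, ⟪Z', Λ a (γ Z)⟫_ℝ = ⟪Z', Z⟫_ℝ := by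
        intro Z' hZ'
        have hle : ∀ Z ∈ F, ⟪Z', Λ a (γ Z)⟫_ℝ ≤ ⟪Z', Z⟫_ℝ := by
          intro Z hZ
          calc ⟪Z', Λ a (γ Z)⟫_ℝ ≤ ⟪γ Z', γ (Λ a (γ Z))⟫_ℝ := hsys.inner_le _ _
            _ = ⟪γ Z', γ Z⟫_ℝ := by rw [hγΛ]
            _ = ⟪Z', Z⟫_ℝ := (hD Z' (hF hZ') Z (hF hZ)).symm
        have hsum : ∑ Z ∈ F, ⟪Z', Λ a (γ Z)⟫_ℝ = ∑ Z ∈ F, ⟪Z', Z⟫_ℝ := by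
          rw [← inner_sum, ← inner_sum, hWsum, ← hY]
        exact fun Z hZ => (Finset.sum_eq_sum_iff_of_le hle).mp hsum Z hZ
      refine ⟨a, fun Z hZ => ?_⟩
      have h1 : ⟪Z, Λ a (γ Z)⟫_ℝ = ⟪Z, Z⟫_ℝ := hterm Z hZ Z hZ
      have h2 : ‖Λ a (γ Z)‖ = ‖Z‖ := by rw [hsys.norm_lambda, hnorm]
      have h0 : ‖Z - Λ a (γ Z)‖ ^ 2 = 0 := by
        rw [norm_sub_sq_real, h1, h2, real_inner_self_eq_norm_sq]
        ring
      have h3 : Z - Λ a (γ Z) = 0 :=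
        norm_eq_zero.mp (pow_eq_zero_iff (n := 2) (by norm_num) |>.mp h0)
      exact sub_eq_zero.mp h3
    -- step 2: choose a finite subset of 𝒟 spanning the span of 𝒟
    have hfg : (Submodule.span ℝ 𝒟).FG := IsNoetherian.noetherian _
    obtain ⟨T, hT⟩ := hfg
    have hmem : ∀ t : 𝓗, t ∈ T → ∃ Ft : Finset 𝓗, ↑Ft ⊆ 𝒟 ∧
        t ∈ Submodule.span ℝ (↑Ft : Set 𝓗) := by
      intro t ht
      have : t ∈ Submodule.span ℝ 𝒟 := by
        rw [← hT]; exact Submodule.subset_span ht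
      exact Submodule.mem_span_finite_of_mem_span this
    choose Ft hFt1 hFt2 using hmem
    set F : Finset 𝓗 := T.attach.biUnion (fun t => Ft t.1 t.2) with hFdef
    have hFsub : (↑F : Set 𝓗) ⊆ 𝒟 := by
      intro x hx
      rw [hFdef] at hx
      simp only [Finset.coe_biUnion, Set.mem_iUnion, Finset.mem_coe] at hx
      obtain ⟨t, _, hxt⟩ := hx
      exact hFt1 t.1 t.2 hxt
    have hspan : Submodule.span ℝ 𝒟 ≤ Submodule.span ℝ (↑F : Set 𝓗) := by
      rw [← hT]
      rw [Submodule.span_le]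
      intro t ht
      refine Submodule.span_mono ?_ (hFt2 t ht)
      intro x hx
      rw [hFdef]
      simp only [Finset.coe_biUnion, Set.mem_iUnion, Finset.mem_coe]
      exact ⟨⟨t, ht⟩, Finset.mem_attach _ _, hx⟩
    obtain ⟨a, haF⟩ := key F hFsub
    refine ⟨a, fun Z hZ => ?_⟩
    -- Z - Λ a (γ Z) is orthogonal to the span of F, which contains Z
    have horthF : ∀ y ∈ Submodule.span ℝ (↑F : Set 𝓗), ⟪Z - Λ a (γ Z), y⟫_ℝ = 0 := by
      intro y hy
      induction hy using Submodule.span_induction with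
      | mem y hy =>
        rw [inner_sub_left]
        have h1 : ⟪Λ a (γ Z), y⟫_ℝ = ⟪Z, y⟫_ℝ := by
          conv_lhs => rw [haF y hy]
          rw [hΛi]
          exact (hD Z hZ y (hFsub hy)).symm
        rw [h1]; ring
      | zero => exact inner_zero_right _
      | add u v _ _ hu hv => rw [inner_add_right, hu, hv]; ring
      | smul c u _ hu => rw [real_inner_smul_right, hu]; ring
    have hZspan : Z ∈ Submodule.span ℝ (↑F : Set 𝓗) :=
      hspan (Submodule.subset_span hZ)
    have horth : ⟪Z - Λ a (γ Z), Z⟫_ℝ = 0 := horthF Z hZspan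
    have h1 : ⟪Λ a (γ Z), Z⟫_ℝ = ⟪Z, Z⟫_ℝ := by
      rw [inner_sub_left] at horth; linarith
    have h2 : ‖Λ a (γ Z)‖ = ‖Z‖ := by rw [hsys.norm_lambda, hnorm]
    have h0 : ‖Z - Λ a (γ Z)‖ ^ 2 = 0 := by
      rw [norm_sub_sq_real, h2, real_inner_comm, h1, real_inner_self_eq_norm_sq]
      ring
    have h3 : Z - Λ a (γ Z) = 0 :=
      norm_eq_zero.mp (pow_eq_zero_iff (n := 2) (by norm_num) |>.mp h0)
    exact sub_eq_zero.mp h3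
  -- (iii) → (i)
  have back : (∃ a : A, ∀ Z ∈ 𝒟, Z = Λ a (γ Z)) →
      ∀ Z ∈ 𝒟, ∀ W ∈ 𝒟, ⟪Z, W⟫_ℝ = ⟪γ Z, γ W⟫_ℝ := by
    rintro ⟨a, ha⟩ Z hZ W hW
    calc ⟪Z, W⟫_ℝ = ⟪Λ a (γ Z), Λ a (γ W)⟫_ℝ := by rw [← ha Z hZ, ← ha W hW]
      _ = ⟪γ Z, γ W⟫_ℝ := hΛi a _ _
  constructor
  · constructor
    · intro h Z hZ W hW
      have hsq : ‖Z - W‖ ^ 2 = ‖γ Z - γ W‖ ^ 2 := by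
        rw [norm_sub_sq_real, norm_sub_sq_real, hnorm Z, hnorm W, h Z hZ W hW]
      have h' : |‖Z - W‖| = |‖γ Z - γ W‖| := (sq_eq_sq_iff_abs_eq_abs (a := ‖Z - W‖) (b := ‖γ Z - γ W‖)).mp hsq
      rwa [abs_of_nonneg (norm_nonneg _), abs_of_nonneg (norm_nonneg _)] at h'
    · intro h Z hZ W hW
      have hsq : ‖Z - W‖ ^ 2 = ‖γ Z - γ W‖ ^ 2 := by rw [h Z hZ W hW]
      rw [norm_sub_sq_real, norm_sub_sq_real, hnorm Z, hnorm W] at hsq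
      linarith
  · exact ⟨main, back⟩
end

section
/- Let 𝔥 be a Euclidean space with spectral decomposition system (𝒳, S, γ, (Λ_a)_{a∈A}), let 𝒟 be a nonempty subset of 𝔥, and suppose there exists a ∈ A such that X = Λ_a(γ(X)) for every X ∈ 𝒟. Then for every positive integer m, every family (X_i)_{1≤i≤m} in 𝒟, and every family (α_i)_{1≤i≤m} of nonnegative reals: γ(Σ_{i=1}^m α_i X_i) = Σ_{i=1}^m α_i γ(X_i), and moreover Σ_{i=1}^m α_i X_i = Λ_a(γ(Σ_{i=1}^m α_i X_i)). -/
open scoped InnerProductSpace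

variable {𝓗 𝓧 : Type*} [NormedAddCommGroup 𝓗] [InnerProductSpace ℝ 𝓗]
  [FiniteDimensional ℝ 𝓗] [NormedAddCommGroup 𝓧] [InnerProductSpace ℝ 𝓧]
  [FiniteDimensional ℝ 𝓧] {S : Type*} [Group S] [MulAction S 𝓧]
  {A : Type*} [Nonempty A]

theorem gamma_additive_on_simultaneously_decomposable
    (γ : 𝓗 → 𝓧) (Λ : A → 𝓧 →ₗ[ℝ] 𝓗) (τ : 𝓧 → 𝓧)
    (hsys : SpectralDecompositionSystem 𝓗 𝓧 S γ Λ τ)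
    (𝒟 : Set 𝓗) (h𝒟 : 𝒟.Nonempty)
    (a : A) (ha : ∀ Z ∈ 𝒟, Z = Λ a (γ Z))
    (m : ℕ) (hm : 0 < m) (Xf : Fin m → 𝓗) (hXf : ∀ i, Xf i ∈ 𝒟)
    (α : Fin m → ℝ) (hα : ∀ i, 0 ≤ α i) :
    γ (∑ i, α i • Xf i) = ∑ i, α i • γ (Xf i) ∧
    (∑ i, α i • Xf i) = Λ a (γ (∑ i, α i • Xf i)) := by
  have hXdec : ∀ i, Xf i = Λ a (γ (Xf i)) := fun i => ha _ (hXf i)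
  set W := ∑ i, α i • Xf i with hW
  set x := ∑ i, α i • γ (Xf i) with hx
  let L : 𝓧 →ₗᵢ[ℝ] 𝓗 := ⟨Λ a, hsys.norm_lambda a⟩
  have hiso : ∀ y z : 𝓧, ⟪Λ a y, Λ a z⟫_ℝ = ⟪y, z⟫_ℝ := fun y z => L.inner_map_map y z
  have hWinner : ⟪W, Λ a x⟫_ℝ = ⟪x, x⟫_ℝ := by
    rw [hW, sum_inner]
    nth_rewrite 2 [hx]
    rw [sum_inner]
    refine Finset.sum_congr rfl fun i _ => ?_
    rw [real_inner_smul_left, real_inner_smul_left]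
    congr 1
    conv_lhs => rw [hXdec i]
    exact hiso _ _
  have hWW : ⟪W, W⟫_ℝ ≤ ⟪x, x⟫_ℝ := by
    rw [hW, hx, sum_inner, sum_inner]
    refine Finset.sum_le_sum fun i _ => ?_
    rw [inner_sum, inner_sum]
    refine Finset.sum_le_sum fun j _ => ?_
    rw [real_inner_smul_left, real_inner_smul_left, real_inner_smul_right,
      real_inner_smul_right]
    exact mul_le_mul_of_nonneg_left
      (mul_le_mul_of_nonneg_left (hsys.inner_le _ _) (hα j)) (hα i)
  have hτnorm : ‖τ x‖ = ‖x‖ := by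
    obtain ⟨s, hs⟩ := hsys.tau_orbit x
    rw [hs, hsys.norm_smul]
  have hxτ : ⟪x, x⟫_ℝ ≤ ⟪x, τ x⟫_ℝ := by
    rw [← hWinner, hW]
    nth_rewrite 2 [hx]
    rw [sum_inner, sum_inner]
    refine Finset.sum_le_sum fun i _ => ?_
    rw [real_inner_smul_left, real_inner_smul_left]
    refine mul_le_mul_of_nonneg_left ?_ (hα i)
    calc ⟪Xf i, Λ a x⟫_ℝ ≤ ⟪γ (Xf i), γ (Λ a x)⟫_ℝ := hsys.inner_le _ _
      _ = ⟪γ (Xf i), τ x⟫_ℝ := by rw [hsys.gamma_lambda]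
  have hτx : τ x = x := by
    have h1 : ⟪x, τ x⟫_ℝ ≤ ‖x‖ * ‖x‖ := by
      calc ⟪x, τ x⟫_ℝ ≤ ‖x‖ * ‖τ x‖ := real_inner_le_norm _ _
        _ = ‖x‖ * ‖x‖ := by rw [hτnorm]
    have h2 : ⟪x, τ x⟫_ℝ = ‖x‖ * ‖x‖ :=
      le_antisymm h1 (by rw [← real_inner_self_eq_norm_mul_norm]; exact hxτ)
    have h3 : ‖τ x - x‖ ^ 2 = 0 := by
      rw [norm_sub_sq_real, hτnorm, real_inner_comm, h2]; ring
    have h4 : τ x - x = 0 := by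
      have := (pow_eq_zero_iff two_ne_zero).mp h3
      exact norm_eq_zero.mp this
    exact sub_eq_zero.mp h4
  have hWeq : W = Λ a x := by
    have h0 : ‖W - Λ a x‖ ^ 2 ≤ 0 := by
      rw [norm_sub_sq_real, hWinner, hsys.norm_lambda]
      have hw : ‖W‖ ^ 2 = ⟪W, W⟫_ℝ := (real_inner_self_eq_norm_sq W).symm
      have hxx : ‖x‖ ^ 2 = ⟪x, x⟫_ℝ := (real_inner_self_eq_norm_sq x).symm
      nlinarith [hWW]
    have h1 : W - Λ a x = 0 := by
      have := le_antisymm h0 (by positivity)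
      have := (pow_eq_zero_iff two_ne_zero).mp this
      exact norm_eq_zero.mp this
    exact sub_eq_zero.mp h1
  have hγW : γ W = x := by rw [hWeq, hsys.gamma_lambda, hτx]
  exact ⟨hγW, by rw [hγW, ← hWeq]⟩
end

section
/- Let 𝔥 be a Euclidean space with spectral decomposition system (𝒳, S, γ, (Λ_a)_{a∈A}) and spectral-induced ordering mapping τ, and let x, y ∈ 𝒳. Then y belongs to the convex hull of the orbit S • x if and only if ⟨y, z⟩ ≤ ⟨τ(x), τ(z)⟩ for every z ∈ 𝒳. Moreover, if both x and y lie in the range of γ, these conditions are also equivalent to: ⟨y − x, z⟩ ≤ 0 for every z in the range of γ. -/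
open scoped InnerProductSpace

private lemma sum_dite_emb {ι κ M : Type*} [Fintype ι] [Fintype κ] [DecidableEq κ] [AddCommMonoid M]
    (e : ι ↪ κ) (g : ι → M) :
    (∑ j : κ, if h : ∃ i, e i = j then g h.choose else 0) = ∑ i, g i := by
  rw [← Finset.sum_subset (Finset.subset_univ (Finset.univ.map e))
    (fun j _ hj => by
      rw [dif_neg]
      rintro ⟨i, rfl⟩
      exact hj (Finset.mem_map_of_mem _ (Finset.mem_univ i)))]
  rw [Finset.sum_map]
  refine Finset.sum_congr rfl fun i _ => ?_
  have hex : ∃ i', e i' = e i := ⟨i, rfl⟩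
  rw [dif_pos hex]
  congr 1
  exact e.injective hex.choose_spec

private lemma aux_isCompact_convexHull {E : Type*} [NormedAddCommGroup E] [NormedSpace ℝ E]
    [FiniteDimensional ℝ E] {K : Set E} (hK : IsCompact K) :
    IsCompact (convexHull ℝ K) := by
  rcases K.eq_empty_or_nonempty with rfl | ⟨k₀, hk₀⟩
  · simpa using isCompact_empty
  obtain ⟨n, hn⟩ : ∃ n : ℕ, Module.finrank ℝ E + 1 = n := ⟨_, rfl⟩
  have hcont : Continuous (fun p : (Fin n → ℝ) × (Fin n → E) => ∑ i, p.1 i • p.2 i) :=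
    continuous_finset_sum _ fun i _ =>
      ((continuous_apply i).comp continuous_fst).smul ((continuous_apply i).comp continuous_snd)
  have himg : convexHull ℝ K =
      (fun p : (Fin n → ℝ) × (Fin n → E) => ∑ i, p.1 i • p.2 i) ''
        (stdSimplex ℝ (Fin n) ×ˢ Set.univ.pi fun _ : Fin n => K) := by
    apply Set.Subset.antisymm
    · intro x hx
      rw [convexHull_eq_union] at hx
      simp only [Set.mem_iUnion, exists_prop] at hx
      obtain ⟨t, htK, haff, hxt⟩ := hx
      have hcard : Fintype.card ↥t ≤ n := by
        calc Fintype.card ↥t ≤ Module.finrank ℝ (vectorSpan ℝ (Set.range ((↑) : ↥t → E))) + 1 :=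
              haff.card_le_finrank_succ
          _ ≤ n := hn ▸ Nat.add_le_add_right (Submodule.finrank_le _) 1
      obtain ⟨e⟩ : Nonempty (↥t ↪ Fin n) :=
        Function.Embedding.nonempty_of_card_le (by simpa using hcard)
      rw [Finset.convexHull_eq] at hxt
      obtain ⟨w, hw0, hw1, hwx⟩ := hxt
      rw [Finset.centerMass_eq_of_sum_1 _ _ hw1] at hwx
      refine ⟨(fun j => if h : ∃ i : ↥t, e i = j then w h.choose else 0,
               fun j => if h : ∃ i : ↥t, e i = j then (h.choose : E) else k₀), ⟨?_, ?_⟩, ?_⟩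
      · constructor
        · intro j
          dsimp only
          by_cases h : ∃ i : ↥t, e i = j
          · rw [dif_pos h]; exact hw0 _ h.choose.2
          · rw [dif_neg h]
        · dsimp only
          exact (sum_dite_emb e (fun i : ↥t => w i)).trans
            ((Finset.sum_coe_sort t w).trans hw1)
      · intro j _
        dsimp only
        by_cases h : ∃ i : ↥t, e i = j
        · rw [dif_pos h]; exact htK h.choose.2
        · rw [dif_neg h]; exact hk₀
      · dsimp only
        have : (∑ j : Fin n, (if h : ∃ i : ↥t, e i = j then w h.choose else 0) •
            (if h : ∃ i : ↥t, e i = j then (h.choose : E) else k₀)) =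
            ∑ j : Fin n, (if h : ∃ i : ↥t, e i = j then w h.choose • (h.choose : E) else 0) := by
          refine Finset.sum_congr rfl fun j _ => ?_
          by_cases h : ∃ i : ↥t, e i = j
          · rw [dif_pos h, dif_pos h, dif_pos h]
          · simp only [dif_neg h, zero_smul]
        refine this.trans ((sum_dite_emb e (fun i : ↥t => w i • (i : E))).trans
          ((Finset.sum_coe_sort t (fun y => w y • y)).trans ?_))
        simpa using hwx
    · rintro x ⟨⟨w, v⟩, ⟨⟨hw0, hw1⟩, hv⟩, rfl⟩
      exact (convex_convexHull ℝ K).sum_mem (fun i _ => hw0 i) hw1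
        (fun i _ => subset_convexHull ℝ K (hv i trivial))
  rw [himg]
  exact (((isCompact_stdSimplex ℝ _).prod (isCompact_univ_pi fun _ => hK))).image hcont

namespace SDSAux

variable {𝓗 𝓧 : Type*} [NormedAddCommGroup 𝓗] [InnerProductSpace ℝ 𝓗]
  [NormedAddCommGroup 𝓧] [InnerProductSpace ℝ 𝓧]
  {S : Type*} [Group S] [MulAction S 𝓧] {A : Type*}
  {γ : 𝓗 → 𝓧} {Λ : A → 𝓧 →ₗ[ℝ] 𝓗} {τ : 𝓧 → 𝓧}

variable (hsys : SpectralDecompositionSystem 𝓗 𝓧 S γ Λ τ)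
include hsys

lemma smul_add' (s : S) (u v : 𝓧) : s • (u + v) = s • u + s • v := by
  have := hsys.smul_add_smul s 1 u v
  simpa using this

lemma inner_smul_smul (s : S) (u v : 𝓧) : ⟪s • u, s • v⟫_ℝ = ⟪u, v⟫_ℝ := by
  rw [real_inner_eq_norm_add_mul_self_sub_norm_mul_self_sub_norm_mul_self_div_two,
    real_inner_eq_norm_add_mul_self_sub_norm_mul_self_sub_norm_mul_self_div_two u v,
    ← smul_add' hsys, hsys.norm_smul, hsys.norm_smul, hsys.norm_smul]

lemma inner_lambda (a : A) (u v : 𝓧) : ⟪Λ a u, Λ a v⟫_ℝ = ⟪u, v⟫_ℝ := by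
  rw [real_inner_eq_norm_add_mul_self_sub_norm_mul_self_sub_norm_mul_self_div_two,
    real_inner_eq_norm_add_mul_self_sub_norm_mul_self_sub_norm_mul_self_div_two u v,
    ← map_add, hsys.norm_lambda, hsys.norm_lambda, hsys.norm_lambda]

lemma inner_le_tau [Nonempty A] (u z : 𝓧) : ⟪u, z⟫_ℝ ≤ ⟪τ u, τ z⟫_ℝ := by
  obtain ⟨a⟩ := ‹Nonempty A›
  calc ⟪u, z⟫_ℝ = ⟪Λ a u, Λ a z⟫_ℝ := (inner_lambda hsys a u z).symm
    _ ≤ ⟪γ (Λ a u), γ (Λ a z)⟫_ℝ := hsys.inner_le _ _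
    _ = ⟪τ u, τ z⟫_ℝ := by rw [hsys.gamma_lambda, hsys.gamma_lambda]

lemma norm_tau (u : 𝓧) : ‖τ u‖ = ‖u‖ := by
  obtain ⟨s, hs⟩ := hsys.tau_orbit u
  rw [hs, hsys.norm_smul]

/-- The value `⟪τ x, τ z⟫` is attained as `⟪s • x, z⟫` for some `s`. -/
lemma exists_inner_repr (x z : 𝓧) : ∃ s : S, ⟪τ x, τ z⟫_ℝ = ⟪s • x, z⟫_ℝ := by
  obtain ⟨s₀, hz⟩ := hsys.tau_orbit z
  obtain ⟨s₁, hx⟩ := hsys.tau_orbit x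
  refine ⟨s₀⁻¹ * s₁, ?_⟩
  have : ⟪(s₀⁻¹ * s₁) • x, z⟫_ℝ = ⟪s₀ • ((s₀⁻¹ * s₁) • x), s₀ • z⟫_ℝ :=
    (inner_smul_smul hsys s₀ _ _).symm
  rw [this, smul_smul, mul_inv_cancel_left, ← hx, ← hz]

lemma orbit_inner_le [Nonempty A] (x z : 𝓧) (s : S) : ⟪s • x, z⟫_ℝ ≤ ⟪τ x, τ z⟫_ℝ := by
  have := inner_le_tau hsys (s • x) z
  rwa [hsys.tau_smul] at this

lemma mem_orbit_of_norm_eq [Nonempty A] {x y : 𝓧} (hnorm : ‖y‖ = ‖x‖)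
    (hle : ∀ z : 𝓧, ⟪y, z⟫_ℝ ≤ ⟪τ x, τ z⟫_ℝ) : y ∈ MulAction.orbit S x := by
  by_cases hx0 : x = 0
  · subst hx0
    have : y = 0 := by simpa [norm_eq_zero] using hnorm
    rw [this]
    exact MulAction.mem_orbit_self 0
  · have hxnorm : ‖x‖ ≠ 0 := norm_ne_zero_iff.mpr hx0
    have h1 : ‖y‖ * ‖y‖ ≤ ⟪τ x, τ y⟫_ℝ := by
      have := hle y
      rwa [real_inner_self_eq_norm_mul_norm] at this
    have h2 : ⟪τ x, τ y⟫_ℝ ≤ ‖τ x‖ * ‖τ y‖ := real_inner_le_norm _ _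
    have hnx : ‖τ x‖ = ‖x‖ := norm_tau hsys x
    have hny : ‖τ y‖ = ‖y‖ := norm_tau hsys y
    have heq : ⟪τ x, τ y⟫_ℝ = ‖τ x‖ * ‖τ y‖ := by
      refine le_antisymm h2 ?_
      rw [hnx, hny, ← hnorm]
      exact h1
    have hkey : ‖τ y‖ • τ x = ‖τ x‖ • τ y := inner_eq_norm_mul_iff_real.mp heq
    have htaueq : τ x = τ y := by
      rw [hny, hnorm, hnx] at hkey
      exact smul_right_injective 𝓧 hxnorm hkey
    obtain ⟨s, hs⟩ := hsys.tau_orbit y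
    obtain ⟨s₁, hs₁⟩ := hsys.tau_orbit x
    have : y = (s⁻¹ * s₁) • x := by
      rw [← smul_smul, ← hs₁, htaueq, hs, inv_smul_smul]
    rw [this]
    exact MulAction.mem_orbit x _

lemma isClosed_orbit [Nonempty A] (x : 𝓧) : IsClosed (MulAction.orbit S x) := by
  have horbit : MulAction.orbit S x =
      {w : 𝓧 | ‖w‖ = ‖x‖} ∩ ⋂ z : 𝓧, {w : 𝓧 | ⟪w, z⟫_ℝ ≤ ⟪τ x, τ z⟫_ℝ} := by
    apply Set.Subset.antisymm
    · rintro w ⟨s, rfl⟩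
      refine ⟨hsys.norm_smul s x, ?_⟩
      simp only [Set.mem_iInter, Set.mem_setOf_eq]
      exact fun z => orbit_inner_le hsys x z s
    · rintro w ⟨hn, hw⟩
      simp only [Set.mem_iInter, Set.mem_setOf_eq] at hn hw
      exact mem_orbit_of_norm_eq hsys hn hw
  rw [horbit]
  exact (isClosed_eq continuous_norm continuous_const).inter
    (isClosed_iInter fun z => isClosed_le (continuous_id.inner continuous_const)
      continuous_const)

lemma tau_fixed_of_mem_range {r : 𝓧} (hr : r ∈ Set.range γ) : τ r = r := by
  obtain ⟨X, rfl⟩ := hr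
  obtain ⟨a, ha⟩ := hsys.exists_decomp X
  have := hsys.gamma_lambda a (γ X)
  rw [← ha] at this
  exact this.symm

lemma tau_mem_range [Nonempty A] (z : 𝓧) : τ z ∈ Set.range γ := by
  obtain ⟨a⟩ := ‹Nonempty A›
  exact ⟨Λ a z, hsys.gamma_lambda a z⟩

end SDSAux

variable {𝓗 𝓧 : Type*} [NormedAddCommGroup 𝓗] [InnerProductSpace ℝ 𝓗]
  [FiniteDimensional ℝ 𝓗] [NormedAddCommGroup 𝓧] [InnerProductSpace ℝ 𝓧]
  [FiniteDimensional ℝ 𝓧] {S : Type*} [Group S] [MulAction S 𝓧]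
  {A : Type*} [Nonempty A]

theorem mem_convexHull_orbit_characterization
    (γ : 𝓗 → 𝓧) (Λ : A → 𝓧 →ₗ[ℝ] 𝓗) (τ : 𝓧 → 𝓧)
    (hsys : SpectralDecompositionSystem 𝓗 𝓧 S γ Λ τ)
    (x y : 𝓧) :
    (y ∈ convexHull ℝ (MulAction.orbit S x) ↔
      ∀ z : 𝓧, ⟪y, z⟫_ℝ ≤ ⟪τ x, τ z⟫_ℝ) ∧
    (x ∈ Set.range γ → y ∈ Set.range γ →
      (y ∈ convexHull ℝ (MulAction.orbit S x) ↔
        ∀ z ∈ Set.range γ, ⟪y - x, z⟫_ℝ ≤ 0)) := by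
  have part1 : y ∈ convexHull ℝ (MulAction.orbit S x) ↔
      ∀ z : 𝓧, ⟪y, z⟫_ℝ ≤ ⟪τ x, τ z⟫_ℝ := by
    constructor
    · intro hy z
      have hsub : MulAction.orbit S x ⊆ {w : 𝓧 | ⟪w, z⟫_ℝ ≤ ⟪τ x, τ z⟫_ℝ} := by
        rintro w ⟨s, rfl⟩
        exact SDSAux.orbit_inner_le hsys x z s
      have hconv : Convex ℝ {w : 𝓧 | ⟪w, z⟫_ℝ ≤ ⟪τ x, τ z⟫_ℝ} :=
        convex_halfSpace_le
          ⟨fun a b => inner_add_left a b z, fun c a => real_inner_smul_left a z c⟩ _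
      exact convexHull_min hsub hconv hy
    · intro hy
      by_contra hny
      have hbdd : Bornology.IsBounded (MulAction.orbit S x) := by
        rw [isBounded_iff_forall_norm_le]
        exact ⟨‖x‖, by rintro w ⟨s, rfl⟩; exact (hsys.norm_smul s x).le⟩
      have hcpt : IsCompact (MulAction.orbit S x) :=
        Metric.isCompact_of_isClosed_isBounded (SDSAux.isClosed_orbit hsys x) hbdd
      have hclosed : IsClosed (convexHull ℝ (MulAction.orbit S x)) :=
        (aux_isCompact_convexHull hcpt).isClosed
      obtain ⟨f, u, hfu, huy⟩ :=
        geometric_hahn_banach_closed_point (convex_convexHull ℝ _) hclosed hny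
      set z := (InnerProductSpace.toDual ℝ 𝓧).symm f with hzdef
      have hz : ∀ w : 𝓧, ⟪z, w⟫_ℝ = f w := fun w => InnerProductSpace.toDual_symm_apply
      obtain ⟨s, hs⟩ := SDSAux.exists_inner_repr hsys x z
      have h1 : ⟪y, z⟫_ℝ ≤ ⟪s • x, z⟫_ℝ := hs ▸ hy z
      have h2 : f (s • x) < u := hfu _ (subset_convexHull ℝ _ (MulAction.mem_orbit x s))
      have h3 : f y ≤ f (s • x) := by
        rw [← hz y, ← hz (s • x)]
        have hc1 : ⟪z, y⟫_ℝ = ⟪y, z⟫_ℝ := real_inner_comm _ _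
        have hc2 : ⟪z, s • x⟫_ℝ = ⟪s • x, z⟫_ℝ := real_inner_comm _ _
        linarith
      linarith
  refine ⟨part1, fun hxr hyr => ?_⟩
  rw [part1]
  constructor
  · intro h z hz
    have hle := h z
    rw [SDSAux.tau_fixed_of_mem_range hsys hxr, SDSAux.tau_fixed_of_mem_range hsys hz] at hle
    rw [inner_sub_left]
    linarith
  · intro h z
    have hmem : τ z ∈ Set.range γ := SDSAux.tau_mem_range hsys z
    have hle := h (τ z) hmem
    rw [inner_sub_left] at hle
    calc ⟪y, z⟫_ℝ ≤ ⟪τ y, τ z⟫_ℝ := SDSAux.inner_le_tau hsys y z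
      _ = ⟪y, τ z⟫_ℝ := by rw [SDSAux.tau_fixed_of_mem_range hsys hyr]
      _ ≤ ⟪x, τ z⟫_ℝ := by linarith
      _ = ⟪τ x, τ z⟫_ℝ := by rw [SDSAux.tau_fixed_of_mem_range hsys hxr]
end

section
/- (Generalized Ky Fan majorization theorem.) Let 𝔥 be a Euclidean space with spectral decomposition system (𝒳, S, γ, (Λ_a)_{a∈A}), let (X_i)_{1≤i≤m} be a finite family in 𝔥, and let (α_i)_{1≤i≤m} be a family of nonnegative reals. Then γ(Σ_{i=1}^m α_i X_i) belongs to the convex hull of the orbit S • (Σ_{i=1}^m α_i γ(X_i)). -/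
open scoped InnerProductSpace

variable {𝓗 𝓧 : Type*} [NormedAddCommGroup 𝓗] [InnerProductSpace ℝ 𝓗]
  [FiniteDimensional ℝ 𝓗] [NormedAddCommGroup 𝓧] [InnerProductSpace ℝ 𝓧]
  [FiniteDimensional ℝ 𝓧] {S : Type*} [Group S] [MulAction S 𝓧]
  {A : Type*} [Nonempty A]


private lemma dite_sum_helper {E : Type*} {M : Type*} [AddCommMonoid M] (t : Finset E) (d : ℕ)
    (hcard : t.card ≤ d) (e : t ≃ Fin t.card) (f : E → M) :
    (∑ j : Fin d, if h : (j : ℕ) < t.card then f ((e.symm ⟨j, h⟩ : t) : E) else 0)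
      = ∑ y ∈ t, f y := by
  have h1 := Fin.sum_univ_eq_sum_range
    (fun n => if h : n < t.card then f ((e.symm ⟨n, h⟩ : t) : E) else 0) d
  rw [h1, ← Finset.sum_subset (Finset.range_subset_range.mpr hcard)
    (fun n _ hn => dif_neg (by simpa using hn))]
  rw [← Fin.sum_univ_eq_sum_range (fun n => if h : n < t.card then f ((e.symm ⟨n, h⟩ : t) : E) else 0) t.card]
  have h2 : ∀ j : Fin t.card,
      (if h : (j : ℕ) < t.card then f ((e.symm ⟨(j : ℕ), h⟩ : t) : E) else 0)
        = f ((e.symm j : t) : E) := by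
    intro j
    rw [dif_pos j.isLt]
  rw [Finset.sum_congr rfl fun j _ => h2 j]
  rw [Equiv.sum_comp e.symm (fun i : t => f (i : E))]
  exact Finset.sum_coe_sort t f

lemma isCompact_convexHull_of_isCompact {E : Type*} [NormedAddCommGroup E] [NormedSpace ℝ E]
    [FiniteDimensional ℝ E] {s : Set E} (hne : s.Nonempty) (hs : IsCompact s) :
    IsCompact (convexHull ℝ s) := by
  classical
  obtain ⟨x₀, hx₀⟩ := hne
  set d := Module.finrank ℝ E + 1 with hd
  have hT : IsCompact ((stdSimplex ℝ (Fin d)) ×ˢ (Set.pi Set.univ fun _ : Fin d => s)) :=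
    (isCompact_stdSimplex (𝕜 := ℝ) (ι := Fin d)).prod (isCompact_univ_pi fun _ => hs)
  have hcont : Continuous fun p : (Fin d → ℝ) × (Fin d → E) => ∑ i, p.1 i • p.2 i :=
    continuous_finset_sum _ fun i _ =>
      ((continuous_apply i).comp continuous_fst).smul ((continuous_apply i).comp continuous_snd)
  have himg : convexHull ℝ s =
      (fun p : (Fin d → ℝ) × (Fin d → E) => ∑ i, p.1 i • p.2 i) ''
        ((stdSimplex ℝ (Fin d)) ×ˢ (Set.pi Set.univ fun _ : Fin d => s)) := by
    apply Set.Subset.antisymm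
    · intro x hx
      rw [convexHull_eq_union] at hx
      simp only [Set.mem_iUnion, exists_prop] at hx
      obtain ⟨t, hts, hindep, hxt⟩ := hx
      have hcard : t.card ≤ d := by
        have h1 := hindep.card_le_finrank_succ
        rw [Fintype.card_coe] at h1
        exact h1.trans (add_le_add_left (Submodule.finrank_le _) 1)
      rw [Finset.convexHull_eq] at hxt
      obtain ⟨w, hw0, hw1, hwx⟩ := hxt
      set e := t.equivFin with he
      set w' : Fin d → ℝ := fun j => if h : (j : ℕ) < t.card then w ((e.symm ⟨j, h⟩ : t) : E) else 0
        with hw'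
      set z' : Fin d → E := fun j => if h : (j : ℕ) < t.card then ((e.symm ⟨j, h⟩ : t) : E) else x₀
        with hz'
      refine ⟨(w', z'), ⟨?_, ?_⟩, ?_⟩
      · refine ⟨fun j => ?_, ?_⟩
        · by_cases h : (j : ℕ) < t.card
          · simpa [w', h] using hw0 _ (Finset.coe_mem _)
          · simp [w', h]
        · rw [hw', dite_sum_helper t d hcard e w]
          exact hw1
      · intro j _
        by_cases h : (j : ℕ) < t.card
        · simpa [z', h] using hts (Finset.coe_mem _)
        · simpa [z', h] using hx₀
      · have hpt : ∀ j : Fin d, w' j • z' j =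
            if h : (j : ℕ) < t.card
              then w ((e.symm ⟨j, h⟩ : t) : E) • ((e.symm ⟨j, h⟩ : t) : E) else 0 := by
          intro j
          by_cases h : (j : ℕ) < t.card <;> simp [w', z', h]
        calc ∑ j : Fin d, w' j • z' j
            = ∑ j : Fin d, if h : (j : ℕ) < t.card
              then w ((e.symm ⟨j, h⟩ : t) : E) • ((e.symm ⟨j, h⟩ : t) : E) else 0 :=
              Finset.sum_congr rfl fun j _ => hpt j
          _ = ∑ y ∈ t, w y • y := dite_sum_helper t d hcard e (fun y => w y • y)
          _ = x := by rw [t.centerMass_eq_of_sum_1 id hw1] at hwx; simpa using hwx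
    · rintro x ⟨⟨wv, zv⟩, ⟨hw, hz⟩, rfl⟩
      exact (convex_convexHull ℝ s).sum_mem (fun i _ => hw.1 i)
        hw.2 (fun i _ => subset_convexHull ℝ s (hz i (Set.mem_univ i)))
  rw [himg]
  exact hT.image hcont

namespace SpectralDecompositionSystem

variable {𝓗 𝓧 : Type*} [NormedAddCommGroup 𝓗] [InnerProductSpace ℝ 𝓗]
  [NormedAddCommGroup 𝓧] [InnerProductSpace ℝ 𝓧]
  {S : Type*} [Group S] [MulAction S 𝓧]
  {A : Type*} {γ : 𝓗 → 𝓧} {Λ : A → 𝓧 →ₗ[ℝ] 𝓗} {τ : 𝓧 → 𝓧}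

lemma smul_zero' (h : SpectralDecompositionSystem 𝓗 𝓧 S γ Λ τ) (s : S) :
    s • (0 : 𝓧) = 0 := by
  have h1 := h.smul_add_smul s 1 0 0
  simp only [one_smul, add_zero] at h1
  exact (add_eq_left.mp h1.symm)

/-- The action of `s` as a linear isometry. -/
noncomputable def smulLI (h : SpectralDecompositionSystem 𝓗 𝓧 S γ Λ τ) (s : S) :
    𝓧 →ₗᵢ[ℝ] 𝓧 where
  toLinearMap :=
    { toFun := fun x => s • x
      map_add' := fun x y => by simpa using h.smul_add_smul s 1 x y
      map_smul' := fun c x => by simpa [h.smul_zero' s] using h.smul_add_smul s c x 0 }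
  norm_map' := h.norm_smul s

lemma inner_smul (h : SpectralDecompositionSystem 𝓗 𝓧 S γ Λ τ) (s : S) (x y : 𝓧) :
    ⟪s • x, s • y⟫_ℝ = ⟪x, y⟫_ℝ :=
  (h.smulLI s).inner_map_map x y

/-- `Λ a` as a linear isometry. -/
noncomputable def lamLI (h : SpectralDecompositionSystem 𝓗 𝓧 S γ Λ τ) (a : A) :
    𝓧 →ₗᵢ[ℝ] 𝓗 := ⟨Λ a, h.norm_lambda a⟩

lemma inner_lambda (h : SpectralDecompositionSystem 𝓗 𝓧 S γ Λ τ) (a : A) (x y : 𝓧) :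
    ⟪Λ a x, Λ a y⟫_ℝ = ⟪x, y⟫_ℝ :=
  (h.lamLI a).inner_map_map x y

lemma inner_le_tau [Nonempty A] (h : SpectralDecompositionSystem 𝓗 𝓧 S γ Λ τ) (x y : 𝓧) :
    ⟪x, y⟫_ℝ ≤ ⟪τ x, τ y⟫_ℝ := by
  obtain ⟨a⟩ := ‹Nonempty A›
  calc ⟪x, y⟫_ℝ = ⟪Λ a x, Λ a y⟫_ℝ := (h.inner_lambda a x y).symm
    _ ≤ ⟪γ (Λ a x), γ (Λ a y)⟫_ℝ := h.inner_le _ _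
    _ = ⟪τ x, τ y⟫_ℝ := by rw [h.gamma_lambda, h.gamma_lambda]

lemma norm_tau (h : SpectralDecompositionSystem 𝓗 𝓧 S γ Λ τ) (x : 𝓧) : ‖τ x‖ = ‖x‖ := by
  obtain ⟨s, hs⟩ := h.tau_orbit x
  rw [hs, h.norm_smul]

lemma lipschitz_tau [Nonempty A] (h : SpectralDecompositionSystem 𝓗 𝓧 S γ Λ τ) :
    LipschitzWith 1 τ := by
  refine LipschitzWith.of_dist_le_mul fun x y => ?_
  rw [dist_eq_norm, dist_eq_norm, NNReal.coe_one, one_mul]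
  have h1 : ‖τ x - τ y‖ ^ 2 ≤ ‖x - y‖ ^ 2 := by
    rw [norm_sub_sq_real, norm_sub_sq_real, h.norm_tau, h.norm_tau]
    have h2 := h.inner_le_tau x y
    linarith
  nlinarith [norm_nonneg (τ x - τ y), norm_nonneg (x - y)]

lemma orbit_isClosed [Nonempty A] (h : SpectralDecompositionSystem 𝓗 𝓧 S γ Λ τ) (v : 𝓧) :
    IsClosed (MulAction.orbit S v) := by
  refine isClosed_of_closure_subset fun y hy => ?_
  have hτy : τ y = τ v := by
    have hsub : MulAction.orbit S v ⊆ {x : 𝓧 | τ x = τ v} := by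
      rintro _ ⟨s, rfl⟩
      exact h.tau_smul s v
    have hcl : IsClosed {x : 𝓧 | τ x = τ v} :=
      isClosed_eq h.lipschitz_tau.continuous continuous_const
    exact closure_minimal hsub hcl hy
  obtain ⟨s, hs⟩ := h.tau_orbit y
  obtain ⟨t, ht⟩ := h.tau_orbit v
  refine MulAction.mem_orbit_iff.mpr ⟨s⁻¹ * t, ?_⟩
  rw [mul_smul, ← ht, ← hτy, hs, inv_smul_smul]

end SpectralDecompositionSystem

set_option linter.unusedSectionVars false in
/-- Generalized Ky Fan majorization theorem. -/
theorem kyFan_majorization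
    (γ : 𝓗 → 𝓧) (Λ : A → 𝓧 →ₗ[ℝ] 𝓗) (τ : 𝓧 → 𝓧)
    (hsys : SpectralDecompositionSystem 𝓗 𝓧 S γ Λ τ)
    (m : ℕ) (Xf : Fin m → 𝓗) (α : Fin m → ℝ) (hα : ∀ i, 0 ≤ α i) :
    γ (∑ i, α i • Xf i) ∈
      convexHull ℝ (MulAction.orbit S (∑ i, α i • γ (Xf i))) := by
  classical
  set Z := ∑ i, α i • Xf i with hZdef
  set v := ∑ i, α i • γ (Xf i) with hvdef
  -- the orbit of `v` is compact
  have horb_bdd : Bornology.IsBounded (MulAction.orbit S v) := by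
    refine (Metric.isBounded_closedBall (x := (0 : 𝓧)) (r := ‖v‖)).subset ?_
    rintro _ ⟨s, rfl⟩
    simp only [Metric.mem_closedBall, dist_zero_right]
    rw [hsys.norm_smul]
  have hcpt : IsCompact (MulAction.orbit S v) :=
    Metric.isCompact_of_isClosed_isBounded (hsys.orbit_isClosed v) horb_bdd
  have hKcpt : IsCompact (convexHull ℝ (MulAction.orbit S v)) :=
    isCompact_convexHull_of_isCompact ⟨v, MulAction.mem_orbit_self v⟩ hcpt
  -- support-function bound: for every `w` there is an orbit point dominating `γ Z` against `w`
  obtain ⟨a₀, hZdec⟩ := hsys.exists_decomp Z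
  have hufix : γ Z = τ (γ Z) := by
    conv_lhs => rw [hZdec]
    rw [hsys.gamma_lambda]
  have key : ∀ w : 𝓧, ∃ c ∈ MulAction.orbit S v, ⟪γ Z, w⟫_ℝ ≤ ⟪c, w⟫_ℝ := by
    intro w
    obtain ⟨s', hs'⟩ := hsys.tau_orbit w
    refine ⟨s'⁻¹ • v, MulAction.mem_orbit v s'⁻¹, ?_⟩
    have h1 : ⟪γ Z, w⟫_ℝ ≤ ⟪γ Z, τ w⟫_ℝ := by
      calc ⟪γ Z, w⟫_ℝ ≤ ⟪τ (γ Z), τ w⟫_ℝ := hsys.inner_le_tau _ _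
        _ = ⟪γ Z, τ w⟫_ℝ := by rw [← hufix]
    have h2 : ⟪Z, Λ a₀ (τ w)⟫_ℝ = ⟪γ Z, τ w⟫_ℝ := by
      nth_rewrite 1 [hZdec]
      exact hsys.inner_lambda a₀ (γ Z) (τ w)
    have h3 : ⟪Z, Λ a₀ (τ w)⟫_ℝ ≤ ⟪v, γ (Λ a₀ (τ w))⟫_ℝ := by
      rw [hZdef, hvdef, sum_inner, sum_inner]
      refine Finset.sum_le_sum fun i _ => ?_
      rw [real_inner_smul_left, real_inner_smul_left]
      exact mul_le_mul_of_nonneg_left (hsys.inner_le _ _) (hα i)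
    have h4 : γ (Λ a₀ (τ w)) = τ w := by
      rw [hsys.gamma_lambda]
      conv_lhs => rw [hs']
      exact hsys.tau_smul s' w
    have h5 : ⟪v, τ w⟫_ℝ = ⟪s'⁻¹ • v, w⟫_ℝ := by
      rw [hs']
      calc ⟪v, s' • w⟫_ℝ = ⟪s' • (s'⁻¹ • v), s' • w⟫_ℝ := by rw [smul_inv_smul]
        _ = ⟪s'⁻¹ • v, w⟫_ℝ := hsys.inner_smul s' _ _
    rw [h4] at h3
    linarith
  -- conclude by Hahn–Banach separation
  by_contra hnot
  obtain ⟨f, r, hfr, hru⟩ := geometric_hahn_banach_closed_point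
    (convex_convexHull ℝ _) hKcpt.isClosed hnot
  set w := (InnerProductSpace.toDual ℝ 𝓧).symm f with hwdef
  obtain ⟨c, hc, hcle⟩ := key w
  have hfc : f c < r := hfr c (subset_convexHull ℝ _ hc)
  have h1 : ⟪w, γ Z⟫_ℝ = f (γ Z) := InnerProductSpace.toDual_symm_apply
  have h2 : ⟪w, c⟫_ℝ = f c := InnerProductSpace.toDual_symm_apply
  rw [real_inner_comm] at h1 h2
  linarith
end

section
/- Let 𝔥 be a Euclidean space with spectral decomposition system (𝒳, S, γ, (Λ_a)_{a∈A}), and let Φ : 𝔥 → [−∞, +∞]. Then the following are equivalent: (i) Φ is a spectral function, i.e., for all X, Y ∈ 𝔥, γ(X) = γ(Y) implies Φ(X) = Φ(Y); (ii) Φ ∘ Λ_a = Φ ∘ Λ_b for all a, b ∈ A; (iii) there exists an S-invariant function φ : 𝒳 → [−∞, +∞] (meaning φ(s • x) = φ(x) for all s ∈ S, x ∈ 𝒳) such that Φ = φ ∘ γ. Moreover, if (iii) holds, then φ = Φ ∘ Λ_a for every a ∈ A (in particular φ is unique). -/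
open scoped InnerProductSpace

variable {𝓗 𝓧 : Type*} [NormedAddCommGroup 𝓗] [InnerProductSpace ℝ 𝓗]
  [FiniteDimensional ℝ 𝓗] [NormedAddCommGroup 𝓧] [InnerProductSpace ℝ 𝓧]
  [FiniteDimensional ℝ 𝓧] {S : Type*} [Group S] [MulAction S 𝓧]
  {A : Type*} [Nonempty A]

theorem spectral_function_characterization
    (γ : 𝓗 → 𝓧) (Λ : A → 𝓧 →ₗ[ℝ] 𝓗) (τ : 𝓧 → 𝓧)
    (hsys : SpectralDecompositionSystem 𝓗 𝓧 S γ Λ τ)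
    (Φ : 𝓗 → EReal) :
    ((∀ Z W : 𝓗, γ Z = γ W → Φ Z = Φ W) ↔
      (∀ a b : A, (fun x => Φ (Λ a x)) = fun x => Φ (Λ b x))) ∧
    ((∀ Z W : 𝓗, γ Z = γ W → Φ Z = Φ W) ↔
      (∃ φ : 𝓧 → EReal, (∀ (s : S) (x : 𝓧), φ (s • x) = φ x) ∧ Φ = φ ∘ γ)) ∧
    (∀ φ : 𝓧 → EReal, (∀ (s : S) (x : 𝓧), φ (s • x) = φ x) → Φ = φ ∘ γ →
      ∀ a : A, φ = fun x => Φ (Λ a x)) := by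
  -- γ Z is a fixed point of τ
  have hfix : ∀ Z : 𝓗, τ (γ Z) = γ Z := by
    intro Z
    obtain ⟨a, ha⟩ := hsys.exists_decomp Z
    have := hsys.gamma_lambda a (γ Z)
    rw [← ha] at this
    exact this.symm
  have h12 : (∀ Z W : 𝓗, γ Z = γ W → Φ Z = Φ W) ↔
      (∀ a b : A, (fun x => Φ (Λ a x)) = fun x => Φ (Λ b x)) := by
    constructor
    · intro h a b
      funext x
      exact h _ _ (by rw [hsys.gamma_lambda, hsys.gamma_lambda])
    · intro h Z W hZW
      obtain ⟨a, ha⟩ := hsys.exists_decomp Z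
      obtain ⟨b, hb⟩ := hsys.exists_decomp W
      rw [ha, hb, ← hZW]
      exact congrFun (h a b) (γ Z)
  refine ⟨h12, ?_, ?_⟩
  · constructor
    · intro h
      obtain ⟨a⟩ := ‹Nonempty A›
      refine ⟨fun x => Φ (Λ a x), ?_, ?_⟩
      · intro s x
        exact h _ _ (by rw [hsys.gamma_lambda, hsys.gamma_lambda, hsys.tau_smul])
      · funext Z
        exact h _ _ (by rw [hsys.gamma_lambda, hfix])
    · rintro ⟨φ, hφS, rfl⟩ Z W hZW
      simp [hZW]
  · rintro φ hφS rfl a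
    funext x
    obtain ⟨s, hs⟩ := hsys.tau_orbit x
    simp only [Function.comp, hsys.gamma_lambda, hs, hφS]
end

section
/- Let 𝔥 be a Euclidean space with spectral decomposition system (𝒳, S, γ, (Λ_a)_{a∈A}), and let φ : 𝒳 → [−∞, +∞] be S-invariant (φ(s • x) = φ(x) for all s ∈ S, x ∈ 𝒳). Then: (i) for every X ∈ 𝔥, the function φ ∘ γ is lower semicontinuous at X if and only if φ is lower semicontinuous at γ(X); and (ii) φ ∘ γ is lower semicontinuous on 𝔥 if and only if φ is lower semicontinuous on 𝒳. -/
open scoped InnerProductSpace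

variable {𝓗 𝓧 : Type*} [NormedAddCommGroup 𝓗] [InnerProductSpace ℝ 𝓗]
  [FiniteDimensional ℝ 𝓗] [NormedAddCommGroup 𝓧] [InnerProductSpace ℝ 𝓧]
  [FiniteDimensional ℝ 𝓧] {S : Type*} [Group S] [MulAction S 𝓧]
  {A : Type*} [Nonempty A]

theorem spectral_function_lowerSemicontinuous_iff
    (γ : 𝓗 → 𝓧) (Λ : A → 𝓧 →ₗ[ℝ] 𝓗) (τ : 𝓧 → 𝓧)
    (hsys : SpectralDecompositionSystem 𝓗 𝓧 S γ Λ τ)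
    (φ : 𝓧 → EReal) (hφ : ∀ (s : S) (x : 𝓧), φ (s • x) = φ x) :
    (∀ Z : 𝓗, LowerSemicontinuousAt (fun W => φ (γ W)) Z ↔
      LowerSemicontinuousAt φ (γ Z)) ∧
    (LowerSemicontinuous (fun W => φ (γ W)) ↔ LowerSemicontinuous φ) := by
  -- γ preserves norms
  have hnorm : ∀ Z : 𝓗, ‖γ Z‖ = ‖Z‖ := by
    intro Z
    obtain ⟨a, ha⟩ := hsys.exists_decomp Z
    conv_rhs => rw [ha]
    rw [hsys.norm_lambda]
  -- γ is 1-Lipschitz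
  have hlip : LipschitzWith 1 γ := by
    apply LipschitzWith.of_dist_le_mul
    intro Z W
    rw [dist_eq_norm, dist_eq_norm, NNReal.coe_one, one_mul]
    have h1 : ‖γ Z - γ W‖ ^ 2 ≤ ‖Z - W‖ ^ 2 := by
      rw [norm_sub_sq_real, norm_sub_sq_real, hnorm Z, hnorm W]
      have := hsys.inner_le Z W
      linarith
    exact le_of_sq_le_sq h1 (norm_nonneg _)
  have hγc : Continuous γ := hlip.continuous
  -- φ ∘ γ ∘ Λ a = φ
  have heq : ∀ a : A, (fun x => φ (γ (Λ a x))) = φ := by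
    intro a
    funext x
    rw [hsys.gamma_lambda]
    obtain ⟨s, hs⟩ := hsys.tau_orbit x
    rw [hs, hφ]
  have hΛc : ∀ a : A, Continuous (Λ a) := fun a =>
    (Λ a).continuous_of_finiteDimensional
  have hpt : ∀ Z : 𝓗, LowerSemicontinuousAt (fun W => φ (γ W)) Z ↔
      LowerSemicontinuousAt φ (γ Z) := by
    intro Z
    constructor
    · intro h
      obtain ⟨a, ha⟩ := hsys.exists_decomp Z
      have h2 : LowerSemicontinuousAt (fun x => φ (γ (Λ a x))) (γ Z) :=
        LowerSemicontinuousAt.comp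
          (f := fun W => φ (γ W)) (g := Λ a) (by rw [← ha]; exact h) ((hΛc a).continuousAt)
      rwa [heq a] at h2
    · intro h
      exact h.comp hγc.continuousAt
  refine ⟨hpt, ?_⟩
  constructor
  · intro h x
    have a : A := Classical.arbitrary A
    have h2 : LowerSemicontinuousAt (fun x => φ (γ (Λ a x))) x :=
      (h (Λ a x)).comp (hΛc a).continuousAt
    rwa [heq a] at h2
  · intro h Z
    exact (hpt Z).mpr (h (γ Z))
end

section
/- (Reduced minimization principle, infimum form.) Let 𝔥 be a Euclidean space with spectral decomposition system (𝒳, S, γ, (Λ_a)_{a∈A}), let φ : 𝒳 → (−∞, +∞] be proper (not identically +∞) and S-invariant (φ(s • x) = φ(x) for all s ∈ S, x ∈ 𝒳), and let Y ∈ 𝔥. Then inf_{X ∈ 𝔥} ( φ(γ(X)) − ⟨X, Y⟩ ) = inf_{x ∈ 𝒳} ( φ(x) − ⟨x, γ(Y)⟩ ), where both infima are taken in [−∞, +∞]. -/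
open scoped InnerProductSpace

variable {𝓗 𝓧 : Type*} [NormedAddCommGroup 𝓗] [InnerProductSpace ℝ 𝓗]
  [FiniteDimensional ℝ 𝓗] [NormedAddCommGroup 𝓧] [InnerProductSpace ℝ 𝓧]
  [FiniteDimensional ℝ 𝓧] {S : Type*} [Group S] [MulAction S 𝓧]
  {A : Type*} [Nonempty A]

/-- Reduced minimization principle, infimum form. -/
theorem reduced_minimization_inf
    (γ : 𝓗 → 𝓧) (Λ : A → 𝓧 →ₗ[ℝ] 𝓗) (τ : 𝓧 → 𝓧)
    (hsys : SpectralDecompositionSystem 𝓗 𝓧 S γ Λ τ)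
    (φ : 𝓧 → EReal) (hproper : ∃ x, φ x ≠ ⊤) (hbot : ∀ x, φ x ≠ ⊥)
    (hφ : ∀ (s : S) (x : 𝓧), φ (s • x) = φ x) (Y : 𝓗) :
    ⨅ Z : 𝓗, (φ (γ Z) - ((⟪Z, Y⟫_ℝ : ℝ) : EReal)) =
      ⨅ x : 𝓧, (φ x - ((⟪x, γ Y⟫_ℝ : ℝ) : EReal)) := by
  refine le_antisymm ?_ ?_
  · -- use the decomposition of Y
    obtain ⟨a, ha⟩ := hsys.exists_decomp Y
    refine le_iInf fun x => ?_
    refine iInf_le_of_le (Λ a x) (le_of_eq ?_)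
    have hiso : ∀ y, ‖Λ a y‖ = ‖y‖ := hsys.norm_lambda a
    let f : 𝓧 →ₗᵢ[ℝ] 𝓗 := ⟨Λ a, hiso⟩
    have hinner : ⟪Λ a x, Y⟫_ℝ = ⟪x, γ Y⟫_ℝ := by
      conv_lhs => rw [ha]
      exact f.inner_map_map x (γ Y)
    have hphi : φ (γ (Λ a x)) = φ x := by
      rw [hsys.gamma_lambda a x]
      obtain ⟨s, hs⟩ := hsys.tau_orbit x
      rw [hs, hφ]
    rw [hinner, hphi]
  · refine le_iInf fun Z => ?_
    refine iInf_le_of_le (γ Z) ?_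
    exact EReal.sub_le_sub le_rfl (EReal.coe_le_coe_iff.mpr (hsys.inner_le Z Y))
end

section
/- (Reduced minimization principle, minimizer characterization.) Let 𝔥 be a Euclidean space with spectral decomposition system (𝒳, S, γ, (Λ_a)_{a∈A}), let φ : 𝒳 → (−∞, +∞] be proper (not identically +∞) and S-invariant (φ(s • x) = φ(x) for all s ∈ S, x ∈ 𝒳), and let Y ∈ 𝔥. Set 𝔖 = Argmin_{Z ∈ 𝔥} ( φ(γ(Z)) − ⟨Z, Y⟩ ) and S₀ = Argmin_{z ∈ 𝒳} ( φ(z) − ⟨z, γ(Y)⟩ ). Then for every X ∈ 𝔥: X ∈ 𝔖 if and only if γ(X) ∈ S₀ and there exists a ∈ A with X = Λ_a(γ(X)) and Y = Λ_a(γ(Y)). -/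
open scoped InnerProductSpace

variable {𝓗 𝓧 : Type*} [NormedAddCommGroup 𝓗] [InnerProductSpace ℝ 𝓗]
  [FiniteDimensional ℝ 𝓗] [NormedAddCommGroup 𝓧] [InnerProductSpace ℝ 𝓧]
  [FiniteDimensional ℝ 𝓧] {S : Type*} [Group S] [MulAction S 𝓧]
  {A : Type*} [Nonempty A]

/-- `Argmin g` is the set of minimizers of `g` if `inf g < +∞`, and `∅` otherwise. -/
def ArgminE {V : Type*} (g : V → EReal) : Set V :=
  {x | (⨅ y, g y) < ⊤ ∧ g x = ⨅ y, g y}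

/-- Reduced minimization principle, minimizer characterization. -/
theorem reduced_minimization_mem_argmin
    (γ : 𝓗 → 𝓧) (Λ : A → 𝓧 →ₗ[ℝ] 𝓗) (τ : 𝓧 → 𝓧)
    (hsys : SpectralDecompositionSystem 𝓗 𝓧 S γ Λ τ)
    (φ : 𝓧 → EReal) (hproper : ∃ x, φ x ≠ ⊤) (hbot : ∀ x, φ x ≠ ⊥)
    (hφ : ∀ (s : S) (x : 𝓧), φ (s • x) = φ x) (Y : 𝓗) (Z : 𝓗) :
    Z ∈ ArgminE (fun W => φ (γ W) - ((⟪W, Y⟫_ℝ : ℝ) : EReal)) ↔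
      (γ Z ∈ ArgminE (fun x => φ x - ((⟪x, γ Y⟫_ℝ : ℝ) : EReal)) ∧
        ∃ a : A, Z = Λ a (γ Z) ∧ Y = Λ a (γ Y)) := by
  obtain ⟨hSlin, hSnorm, hΛnorm, hτS, hτorb, hγΛ, hdec, hineq⟩ := hsys
  -- Λ a preserves inner products
  have hΛinner : ∀ (a : A) (x y : 𝓧), ⟪Λ a x, Λ a y⟫_ℝ = ⟪x, y⟫_ℝ := by
    intro a x y
    have e1 : ‖Λ a x + Λ a y‖ = ‖x + y‖ := by rw [← map_add]; exact hΛnorm a (x + y)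
    have e2 := hΛnorm a x
    have e3 := hΛnorm a y
    have p1 := norm_add_sq_real (Λ a x) (Λ a y)
    have p2 := norm_add_sq_real x y
    rw [e1, e2, e3] at p1
    linarith
  -- γ is norm-preserving
  have hγnorm : ∀ W : 𝓗, ‖γ W‖ = ‖W‖ := by
    intro W
    obtain ⟨a, ha⟩ := hdec W
    conv_rhs => rw [ha]
    rw [hΛnorm]
  -- τ fixes the range of γ
  have hγτ : ∀ W : 𝓗, τ (γ W) = γ W := by
    intro W
    obtain ⟨a, ha⟩ := hdec W
    rw [← hγΛ a (γ W), ← ha]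
  have hφτ : ∀ x : 𝓧, φ (τ x) = φ x := by
    intro x
    obtain ⟨s, hs⟩ := hτorb x
    rw [hs, hφ]
  -- equality case of the trace inequality
  have hkey : ∀ W V : 𝓗, ⟪W, V⟫_ℝ = ⟪γ W, γ V⟫_ℝ →
      ∃ a : A, W = Λ a (γ W) ∧ V = Λ a (γ V) := by
    intro W V h
    have hadd : γ (W + V) = γ W + γ V := by
      have hb : ‖γ W + γ V‖ ^ 2 = ‖W + V‖ ^ 2 := by
        rw [norm_add_sq_real, norm_add_sq_real, hγnorm, hγnorm, h]
      have hA1 : ‖W + V‖ ^ 2 ≤ ⟪γ (W + V), γ W + γ V⟫_ℝ := by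
        have i1 := hineq (W + V) W
        have i2 := hineq (W + V) V
        have : ⟪W + V, W⟫_ℝ + ⟪W + V, V⟫_ℝ = ‖W + V‖ ^ 2 := by
          rw [← inner_add_right, real_inner_self_eq_norm_sq]
        rw [inner_add_right]
        linarith
      have hA2 : ⟪γ (W + V), γ W + γ V⟫_ℝ ≤ ‖W + V‖ * ‖γ W + γ V‖ := by
        have := real_inner_le_norm (γ (W + V)) (γ W + γ V)
        rwa [hγnorm] at this
      have hnn1 : (0:ℝ) ≤ ‖γ W + γ V‖ := norm_nonneg _
      have hnn2 : (0:ℝ) ≤ ‖W + V‖ := norm_nonneg _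
      have hz : ‖γ (W + V) - (γ W + γ V)‖ ^ 2 = 0 := by
        rw [norm_sub_sq_real, hγnorm, hb]
        nlinarith [sq_nonneg (‖γ W + γ V‖ - ‖W + V‖)]
      have := pow_eq_zero_iff (n := 2) (by norm_num) |>.mp hz
      rw [norm_eq_zero, sub_eq_zero] at this
      exact this
    obtain ⟨a, ha⟩ := hdec (W + V)
    have hsum : W + V = Λ a (γ W) + Λ a (γ V) := by
      rw [← map_add]; rw [← hadd]; exact ha
    refine ⟨a, ?_, ?_⟩
    · have huv : (W - Λ a (γ W)) + (V - Λ a (γ V)) = 0 := by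
        rw [sub_add_sub_comm, hsum, sub_self]
      have hv : V - Λ a (γ V) = -(W - Λ a (γ W)) := by
        rw [eq_neg_iff_add_eq_zero, add_comm]; exact huv
      have b1 : ⟪W, Λ a (γ V)⟫_ℝ ≤ ⟪γ W, γ V⟫_ℝ := by
        have := hineq W (Λ a (γ V))
        rwa [hγΛ, hγτ] at this
      have b2 : ⟪Λ a (γ W), V⟫_ℝ ≤ ⟪γ W, γ V⟫_ℝ := by
        have := hineq (Λ a (γ W)) V
        rwa [hγΛ, hγτ] at this
      have hiz : ⟪W - Λ a (γ W), W - Λ a (γ W)⟫_ℝ ≤ 0 := by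
        nth_rewrite 2 [show W - Λ a (γ W) = -(V - Λ a (γ V)) by rw [hv, neg_neg]]
        rw [inner_neg_right, inner_sub_left, inner_sub_right, inner_sub_right,
          hΛinner]
        have := h
        linarith [b1, b2]
      have : W - Λ a (γ W) = 0 := by
        have hnn := real_inner_self_nonneg (x := W - Λ a (γ W))
        have : ⟪W - Λ a (γ W), W - Λ a (γ W)⟫_ℝ = 0 := le_antisymm hiz hnn
        exact inner_self_eq_zero.mp this
      rw [sub_eq_zero] at this; exact this
    · have huv : (W - Λ a (γ W)) + (V - Λ a (γ V)) = 0 := by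
        rw [sub_add_sub_comm, hsum, sub_self]
      have hv : W - Λ a (γ W) = -(V - Λ a (γ V)) := by
        rw [eq_neg_iff_add_eq_zero]; exact huv
      have b1 : ⟪W, Λ a (γ V)⟫_ℝ ≤ ⟪γ W, γ V⟫_ℝ := by
        have := hineq W (Λ a (γ V))
        rwa [hγΛ, hγτ] at this
      have b2 : ⟪Λ a (γ W), V⟫_ℝ ≤ ⟪γ W, γ V⟫_ℝ := by
        have := hineq (Λ a (γ W)) V
        rwa [hγΛ, hγτ] at this
      have hiz : ⟪V - Λ a (γ V), V - Λ a (γ V)⟫_ℝ ≤ 0 := by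
        nth_rewrite 2 [show V - Λ a (γ V) = -(W - Λ a (γ W)) by rw [hv, neg_neg]]
        rw [inner_neg_right, inner_sub_left, inner_sub_right, inner_sub_right,
          hΛinner]
        linarith [b1, b2, h, real_inner_comm V (Λ a (γ W)),
          real_inner_comm (Λ a (γ V)) W, real_inner_comm (γ V) (γ W),
          real_inner_comm V W]
      have : V - Λ a (γ V) = 0 := by
        have hnn := real_inner_self_nonneg (x := V - Λ a (γ V))
        have : ⟪V - Λ a (γ V), V - Λ a (γ V)⟫_ℝ = 0 := le_antisymm hiz hnn
        exact inner_self_eq_zero.mp this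
      rw [sub_eq_zero] at this; exact this
  -- comparison of the two objective functions
  obtain ⟨a₀, ha₀⟩ := hdec Y
  have hFf : ∀ W : 𝓗, φ (γ W) - ((⟪γ W, γ Y⟫_ℝ : ℝ) : EReal) ≤
      φ (γ W) - ((⟪W, Y⟫_ℝ : ℝ) : EReal) := fun W =>
    EReal.sub_le_sub (le_refl _) (EReal.coe_le_coe_iff.mpr (hineq W Y))
  have hFx : ∀ x : 𝓧, φ (γ (Λ a₀ x)) - ((⟪Λ a₀ x, Y⟫_ℝ : ℝ) : EReal) =
      φ x - ((⟪x, γ Y⟫_ℝ : ℝ) : EReal) := by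
    intro x
    rw [hγΛ, hφτ]
    congr 2
    conv_lhs => rw [ha₀]
    rw [hΛinner]
  have him : (⨅ W : 𝓗, φ (γ W) - ((⟪W, Y⟫_ℝ : ℝ) : EReal)) =
      ⨅ x : 𝓧, φ x - ((⟪x, γ Y⟫_ℝ : ℝ) : EReal) := by
    apply le_antisymm
    · exact le_iInf fun x => iInf_le_of_le (Λ a₀ x) (le_of_eq (hFx x))
    · exact le_iInf fun W => iInf_le_of_le (γ W) (hFf W)
  simp only [ArgminE, Set.mem_setOf_eq]
  constructor
  · rintro ⟨hlt, heq⟩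
    rw [him] at hlt heq
    have h1 : φ (γ Z) - ((⟪γ Z, γ Y⟫_ℝ : ℝ) : EReal) =
        ⨅ x : 𝓧, φ x - ((⟪x, γ Y⟫_ℝ : ℝ) : EReal) :=
      le_antisymm (heq ▸ hFf Z) (iInf_le _ _)
    have hinner : ⟪Z, Y⟫_ℝ = ⟪γ Z, γ Y⟫_ℝ := by
      have hfin : φ (γ Z) ≠ ⊤ := by
        intro htop
        rw [htop, EReal.top_sub_coe] at h1
        exact ne_of_lt hlt h1.symm
      obtain ⟨b, hb⟩ : ∃ b : ℝ, φ (γ Z) = (b : EReal) :=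
        ⟨(φ (γ Z)).toReal, (EReal.coe_toReal hfin (hbot _)).symm⟩
      have hFZ : φ (γ Z) - ((⟪Z, Y⟫_ℝ : ℝ) : EReal) =
          φ (γ Z) - ((⟪γ Z, γ Y⟫_ℝ : ℝ) : EReal) := heq.trans h1.symm
      rw [hb, ← EReal.coe_sub, ← EReal.coe_sub, EReal.coe_eq_coe_iff] at hFZ
      linarith
    obtain ⟨a, ha1, ha2⟩ := hkey Z Y hinner
    exact ⟨⟨hlt, h1⟩, a, ha1, ha2⟩
  · rintro ⟨⟨hlt, h1⟩, a, haZ, haY⟩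
    have hinner : ⟪Z, Y⟫_ℝ = ⟪γ Z, γ Y⟫_ℝ := by
      conv_lhs => rw [haZ, haY]
      rw [hΛinner]
    refine ⟨him ▸ hlt, ?_⟩
    rw [him, hinner, h1]
end

section
/- (Reduced minimization principle, structure of the solution set.) Let 𝔥 be a Euclidean space with spectral decomposition system (𝒳, S, γ, (Λ_a)_{a∈A}), let φ : 𝒳 → (−∞, +∞] be proper (not identically +∞) and S-invariant (φ(s • x) = φ(x) for all s ∈ S, x ∈ 𝒳), and let Y ∈ 𝔥. Set 𝔖 = Argmin_{Z ∈ 𝔥} ( φ(γ(Z)) − ⟨Z, Y⟩ ), S₀ = Argmin_{z ∈ 𝒳} ( φ(z) − ⟨z, γ(Y)⟩ ), and A_Y = {a ∈ A : Y = Λ_a(γ(Y))}. Then: (i) 𝔖 = { Λ_b x : x ∈ S₀, b ∈ A_Y }; (ii) 𝔖 is convex if and only if S₀ is convex; (iii) 𝔖 is a singleton if and only if S₀ is a singleton. -/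
open scoped InnerProductSpace

private lemma ereal_sub_le_sub_right {a : EReal} {r q : ℝ} (h : q ≤ r) :
    a - (r : EReal) ≤ a - (q : EReal) := by
  rw [sub_eq_add_neg, sub_eq_add_neg]
  refine add_le_add le_rfl ?_
  rw [← EReal.coe_neg, ← EReal.coe_neg, EReal.coe_le_coe_iff]
  linarith

private lemma ereal_sub_le_cancel {a : EReal} (hb : a ≠ ⊥) (ht : a ≠ ⊤) {r q : ℝ}
    (h : a - (r : EReal) ≤ a - (q : EReal)) : q ≤ r := by
  have ha : ((a.toReal : ℝ) : EReal) = a := EReal.coe_toReal ht hb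
  rw [← ha, ← EReal.coe_sub, ← EReal.coe_sub, EReal.coe_le_coe_iff] at h
  linarith

private lemma ereal_sub_ne_bot {a : EReal} (hb : a ≠ ⊥) (r : ℝ) : a - (r : EReal) ≠ ⊥ := by
  rcases eq_or_ne a ⊤ with rfl | ht
  · rw [EReal.top_sub_coe]; exact bot_lt_top.ne'
  · have ha : ((a.toReal : ℝ) : EReal) = a := EReal.coe_toReal ht hb
    rw [← ha, ← EReal.coe_sub]
    exact EReal.coe_ne_bot _

private lemma ereal_sub_lt_top {a : EReal} (ht : a ≠ ⊤) (r : ℝ) : a - (r : EReal) < ⊤ := by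
  rcases eq_or_ne a ⊥ with rfl | hb
  · rw [EReal.bot_sub]; exact bot_lt_top
  · have ha : ((a.toReal : ℝ) : EReal) = a := EReal.coe_toReal ht hb
    rw [← ha, ← EReal.coe_sub]
    exact EReal.coe_lt_top _

private lemma inner_map_map_of_norm {E F : Type*} [NormedAddCommGroup E] [InnerProductSpace ℝ E]
    [NormedAddCommGroup F] [InnerProductSpace ℝ F] (f : E → F)
    (hadd : ∀ x y, f (x + y) = f x + f y) (hnorm : ∀ x, ‖f x‖ = ‖x‖) (x y : E) :
    ⟪f x, f y⟫_ℝ = ⟪x, y⟫_ℝ := by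
  rw [real_inner_eq_norm_add_mul_self_sub_norm_mul_self_sub_norm_mul_self_div_two,
    real_inner_eq_norm_add_mul_self_sub_norm_mul_self_sub_norm_mul_self_div_two (x := x),
    ← hadd, hnorm, hnorm, hnorm]

private lemma isCompact_convexHull_aux {E : Type*} [NormedAddCommGroup E] [NormedSpace ℝ E]
    [FiniteDimensional ℝ E] {D : Set E} (hD : IsCompact D) : IsCompact (convexHull ℝ D) := by
  classical
  rcases D.eq_empty_or_nonempty with rfl | ⟨d₀, hd₀⟩
  · simp [convexHull_empty]
  set n : ℕ := Module.finrank ℝ E + 1 with hn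
  have hTcpt : IsCompact ((stdSimplex ℝ (Fin n)) ×ˢ Set.pi Set.univ fun _ : Fin n => D) :=
    (isCompact_stdSimplex (𝕜 := ℝ) (ι := Fin n)).prod (isCompact_univ_pi fun _ => hD)
  have hcont : Continuous fun p : (Fin n → ℝ) × (Fin n → E) => ∑ i : Fin n, p.1 i • p.2 i := by
    apply continuous_finset_sum
    intro i _
    exact ((continuous_apply i).comp continuous_fst).smul ((continuous_apply i).comp continuous_snd)
  have himg : (fun p : (Fin n → ℝ) × (Fin n → E) => ∑ i : Fin n, p.1 i • p.2 i) ''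
      ((stdSimplex ℝ (Fin n)) ×ˢ Set.pi Set.univ fun _ : Fin n => D) = convexHull ℝ D := by
    apply Set.Subset.antisymm
    · rintro x ⟨⟨wv, zv⟩, ⟨hw, hz⟩, rfl⟩
      exact (convex_convexHull ℝ D).sum_mem (fun i _ => hw.1 i) hw.2
        fun i _ => subset_convexHull ℝ D (hz i (Set.mem_univ i))
    · intro x hx
      obtain ⟨ι, hfin, z, wv, hrange, hindep, hpos, hsum, hcomb⟩ :=
        eq_pos_convex_span_of_mem_convexHull hx
      letI := hfin
      have hcard : Fintype.card ι ≤ Fintype.card (Fin n) := by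
        have h1 := hindep.card_le_finrank_succ
        have h2 : Module.finrank ℝ (vectorSpan ℝ (Set.range z)) ≤ Module.finrank ℝ E :=
          Submodule.finrank_le _
        simp only [Fintype.card_fin]
        omega
      obtain ⟨e⟩ : Nonempty (ι ↪ Fin n) := Function.Embedding.nonempty_iff_card_le.2 hcard
      set w' : Fin n → ℝ := fun j => if h : ∃ i, e i = j then wv h.choose else 0 with hw'
      set z' : Fin n → E := fun j => if h : ∃ i, e i = j then z h.choose else d₀ with hz'
      have hw'e : ∀ i, w' (e i) = wv i := by
        intro i
        have h : ∃ i', e i' = e i := ⟨i, rfl⟩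
        simp only [hw', dif_pos h]
        rw [e.injective h.choose_spec]
      have hz'e : ∀ i, z' (e i) = z i := by
        intro i
        have h : ∃ i', e i' = e i := ⟨i, rfl⟩
        simp only [hz', dif_pos h]
        rw [e.injective h.choose_spec]
      have houtside : ∀ j : Fin n, j ∉ Finset.univ.image e → w' j = 0 := by
        intro j hj
        have : ¬ ∃ i, e i = j := by simpa [Finset.mem_image] using hj
        simp [hw', dif_neg this]
      have hinj : ∀ i ∈ Finset.univ, ∀ i' ∈ (Finset.univ : Finset ι), e i = e i' → i = i' :=
        fun i _ i' _ h => e.injective h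
      have hsum' : ∑ j : Fin n, w' j = 1 := by
        rw [← Finset.sum_subset (Finset.subset_univ (Finset.univ.image e))
          (fun j _ hj => houtside j hj)]
        rw [Finset.sum_image hinj]
        simp only [hw'e]
        exact hsum
      have hcomb' : ∑ j : Fin n, w' j • z' j = x := by
        rw [← Finset.sum_subset (Finset.subset_univ (Finset.univ.image e))
          (fun j _ hj => by rw [houtside j hj, zero_smul])]
        rw [Finset.sum_image hinj]
        simp only [hw'e, hz'e]
        exact hcomb
      refine ⟨(w', z'), ⟨⟨fun j => ?_, hsum'⟩, fun j _ => ?_⟩, hcomb'⟩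
      · by_cases h : ∃ i, e i = j
        · simp only [hw', dif_pos h]; exact (hpos _).le
        · simp [hw', dif_neg h]
      · by_cases h : ∃ i, e i = j
        · simp only [hz', dif_pos h]; exact hrange ⟨h.choose, rfl⟩
        · simp only [hz', dif_neg h]; exact hd₀
  rw [← himg]
  exact hTcpt.image hcont

variable {𝓗 𝓧 : Type*} [NormedAddCommGroup 𝓗] [InnerProductSpace ℝ 𝓗]
  [FiniteDimensional ℝ 𝓗] [NormedAddCommGroup 𝓧] [InnerProductSpace ℝ 𝓧]
  [FiniteDimensional ℝ 𝓧] {S : Type*} [Group S] [MulAction S 𝓧]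
  {A : Type*} [Nonempty A]

/-- Reduced minimization principle, structure of the solution set. -/
theorem reduced_minimization_argmin_structure
    (γ : 𝓗 → 𝓧) (Λ : A → 𝓧 →ₗ[ℝ] 𝓗) (τ : 𝓧 → 𝓧)
    (hsys : SpectralDecompositionSystem 𝓗 𝓧 S γ Λ τ)
    (φ : 𝓧 → EReal) (hproper : ∃ x, φ x ≠ ⊤) (hbot : ∀ x, φ x ≠ ⊥)
    (hφ : ∀ (s : S) (x : 𝓧), φ (s • x) = φ x) (Y : 𝓗) :
    (ArgminE (fun W => φ (γ W) - ((⟪W, Y⟫_ℝ : ℝ) : EReal)) =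
      {W : 𝓗 | ∃ x ∈ ArgminE (fun z => φ z - ((⟪z, γ Y⟫_ℝ : ℝ) : EReal)),
        ∃ b : A, Y = Λ b (γ Y) ∧ W = Λ b x}) ∧
    (Convex ℝ (ArgminE (fun W => φ (γ W) - ((⟪W, Y⟫_ℝ : ℝ) : EReal))) ↔
      Convex ℝ (ArgminE (fun z => φ z - ((⟪z, γ Y⟫_ℝ : ℝ) : EReal)))) ∧
    ((∃ W₀ : 𝓗, ArgminE (fun W => φ (γ W) - ((⟪W, Y⟫_ℝ : ℝ) : EReal)) = {W₀}) ↔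
      (∃ x₀ : 𝓧, ArgminE (fun z => φ z - ((⟪z, γ Y⟫_ℝ : ℝ) : EReal)) = {x₀})) := by
  classical
  haveI : CompleteSpace 𝓧 := FiniteDimensional.complete ℝ 𝓧
  set gFn : 𝓗 → EReal := fun W => φ (γ W) - ((⟪W, Y⟫_ℝ : ℝ) : EReal) with hgFn
  set hFn : 𝓧 → EReal := fun z => φ z - ((⟪z, γ Y⟫_ℝ : ℝ) : EReal) with hhFn
  -- basic algebraic facts about the action
  have sm_add : ∀ (s : S) (x y : 𝓧), s • (x + y) = s • x + s • y := by
    intro s x y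
    have := hsys.smul_add_smul s 1 x y
    simpa using this
  have sm_zero : ∀ s : S, s • (0 : 𝓧) = 0 := by
    intro s
    have := hsys.smul_add_smul s 1 0 0
    simp only [one_smul, add_zero] at this
    exact (left_eq_add.1 this)
  have sm_smul : ∀ (s : S) (c : ℝ) (x : 𝓧), s • (c • x) = c • (s • x) := by
    intro s c x
    have := hsys.smul_add_smul s c x 0
    simpa [sm_zero s] using this
  have sm_inner : ∀ (s : S) (x y : 𝓧), ⟪s • x, s • y⟫_ℝ = ⟪x, y⟫_ℝ :=
    fun s => inner_map_map_of_norm (fun x => s • x) (sm_add s) (hsys.norm_smul s)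
  have sm_inner' : ∀ (s : S) (x y : 𝓧), ⟪x, s • y⟫_ℝ = ⟪s⁻¹ • x, y⟫_ℝ := by
    intro s x y
    calc ⟪x, s • y⟫_ℝ = ⟪s⁻¹ • x, s⁻¹ • (s • y)⟫_ℝ := (sm_inner s⁻¹ x (s • y)).symm
    _ = ⟪s⁻¹ • x, y⟫_ℝ := by rw [inv_smul_smul]
  have lam_inner : ∀ (a : A) (x y : 𝓧), ⟪Λ a x, Λ a y⟫_ℝ = ⟪x, y⟫_ℝ :=
    fun a => inner_map_map_of_norm (Λ a) (map_add (Λ a)) (hsys.norm_lambda a)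
  have gamma_norm : ∀ Z : 𝓗, ‖γ Z‖ = ‖Z‖ := by
    intro Z
    obtain ⟨a, ha⟩ := hsys.exists_decomp Z
    conv_rhs => rw [ha]
    exact (hsys.norm_lambda a (γ Z)).symm
  have tau_norm : ∀ x : 𝓧, ‖τ x‖ = ‖x‖ := by
    intro x
    obtain ⟨s, hs⟩ := hsys.tau_orbit x
    rw [hs, hsys.norm_smul]
  have tau_gamma : ∀ Z : 𝓗, τ (γ Z) = γ Z := by
    intro Z
    obtain ⟨a, ha⟩ := hsys.exists_decomp Z
    have h := hsys.gamma_lambda a (γ Z)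
    rw [← ha] at h
    exact h.symm
  have tau_tau : ∀ x : 𝓧, τ (τ x) = τ x := by
    intro x
    obtain ⟨s, hs⟩ := hsys.tau_orbit x
    rw [hs, hsys.tau_smul]
    exact hs
  have inner_le_tau : ∀ x y : 𝓧, ⟪x, y⟫_ℝ ≤ ⟪τ x, τ y⟫_ℝ := by
    intro x y
    have a : A := Classical.arbitrary A
    calc ⟪x, y⟫_ℝ = ⟪Λ a x, Λ a y⟫_ℝ := (lam_inner a x y).symm
    _ ≤ ⟪γ (Λ a x), γ (Λ a y)⟫_ℝ := hsys.inner_le _ _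
    _ = ⟪τ x, τ y⟫_ℝ := by rw [hsys.gamma_lambda, hsys.gamma_lambda]
  have tau_lip : LipschitzWith 1 τ := by
    apply LipschitzWith.of_dist_le_mul
    intro x y
    simp only [NNReal.coe_one, one_mul, dist_eq_norm]
    have hsq : ‖τ x - τ y‖ ^ 2 ≤ ‖x - y‖ ^ 2 := by
      rw [norm_sub_sq_real, norm_sub_sq_real, tau_norm, tau_norm]
      linarith [inner_le_tau x y]
    nlinarith [norm_nonneg (τ x - τ y), norm_nonneg (x - y)]
  have orbit_char : ∀ x y : 𝓧, τ y = τ x ↔ ∃ s : S, y = s • x := by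
    intro x y
    constructor
    · intro h
      obtain ⟨s, hs⟩ := hsys.tau_orbit y
      obtain ⟨s', hs'⟩ := hsys.tau_orbit x
      refine ⟨s⁻¹ * s', ?_⟩
      have hy : y = s⁻¹ • τ y := by rw [hs, inv_smul_smul]
      rw [hy, h, hs', smul_smul]
    · rintro ⟨s, rfl⟩
      exact hsys.tau_smul s x
  have orbit_cpt : ∀ x : 𝓧, IsCompact {y : 𝓧 | τ y = τ x} := by
    intro x
    apply Metric.isCompact_of_isClosed_isBounded
    · exact isClosed_eq tau_lip.continuous continuous_const
    · apply Bornology.IsBounded.subset (Metric.isBounded_closedBall (x := (0 : 𝓧)) (r := ‖x‖))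
      intro y hy
      obtain ⟨s, hs⟩ := (orbit_char x y).1 hy
      rw [Metric.mem_closedBall, dist_zero_right, hs, hsys.norm_smul]
  -- simultaneous decomposition from equality in the trace inequality
  have simul : ∀ X Z : 𝓗, ⟪X, Z⟫_ℝ = ⟪γ X, γ Z⟫_ℝ →
      ∃ a : A, X = Λ a (γ X) ∧ Z = Λ a (γ Z) := by
    intro X Z heq
    obtain ⟨a, ha⟩ := hsys.exists_decomp (X + Z)
    have hwn : ‖γ (X + Z)‖ = ‖X + Z‖ := gamma_norm _
    have hun : ‖γ X‖ = ‖X‖ := gamma_norm _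
    have hvn : ‖γ Z‖ = ‖Z‖ := gamma_norm _
    have h1 : ⟪X, X + Z⟫_ℝ ≤ ⟪γ X, γ (X + Z)⟫_ℝ := hsys.inner_le _ _
    have h2 : ⟪Z, X + Z⟫_ℝ ≤ ⟪γ Z, γ (X + Z)⟫_ℝ := hsys.inner_le _ _
    have e0 : ⟪X + Z, X + Z⟫_ℝ = ⟪X, X + Z⟫_ℝ + ⟪Z, X + Z⟫_ℝ := inner_add_left _ _ _
    have hw_eq : γ (X + Z) = γ X + γ Z := by
      have e1 : ‖γ X + γ Z‖ ^ 2 = ‖γ (X + Z)‖ ^ 2 := by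
        rw [norm_add_sq_real, hun, hvn, hwn, norm_add_sq_real, heq]
      have e2 : ‖γ (X + Z)‖ ^ 2 ≤ ⟪γ X + γ Z, γ (X + Z)⟫_ℝ := by
        rw [inner_add_left, hwn]
        have e3 : ‖X + Z‖ ^ 2 = ⟪X, X + Z⟫_ℝ + ⟪Z, X + Z⟫_ℝ := by
          rw [← e0, real_inner_self_eq_norm_sq]
        linarith
      have e4 : ‖γ X + γ Z - γ (X + Z)‖ ^ 2 ≤ 0 := by
        rw [norm_sub_sq_real]
        have := real_inner_self_eq_norm_sq (γ X + γ Z)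
        linarith
      have e5 : ‖γ X + γ Z - γ (X + Z)‖ = 0 := by
        nlinarith [norm_nonneg (γ X + γ Z - γ (X + Z))]
      have := sub_eq_zero.mp (norm_eq_zero.mp e5)
      exact this.symm
    have hXZ : X + Z = Λ a (γ X) + Λ a (γ Z) := by
      calc X + Z = Λ a (γ (X + Z)) := ha
      _ = Λ a (γ X) + Λ a (γ Z) := by rw [hw_eq, map_add]
    have h6 : ⟪X, Λ a (γ Z)⟫_ℝ ≤ ⟪γ X, γ Z⟫_ℝ := by
      have h := hsys.inner_le X (Λ a (γ Z))
      rwa [hsys.gamma_lambda, tau_gamma] at h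
    have h7 : ‖X‖ ^ 2 ≤ ⟪X, Λ a (γ X)⟫_ℝ := by
      have hXXZ : ⟪X, X + Z⟫_ℝ = ‖X‖ ^ 2 + ⟪γ X, γ Z⟫_ℝ := by
        rw [inner_add_right, real_inner_self_eq_norm_sq, heq]
      have hsplit : ⟪X, X + Z⟫_ℝ = ⟪X, Λ a (γ X)⟫_ℝ + ⟪X, Λ a (γ Z)⟫_ℝ := by
        conv_lhs => rw [hXZ]
        exact inner_add_right _ _ _
      linarith
    have h8 : X = Λ a (γ X) := by
      have h9 : ‖X - Λ a (γ X)‖ ^ 2 ≤ 0 := by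
        rw [norm_sub_sq_real, hsys.norm_lambda, hun]
        linarith
      have h10 : ‖X - Λ a (γ X)‖ = 0 := by
        nlinarith [norm_nonneg (X - Λ a (γ X))]
      exact sub_eq_zero.mp (norm_eq_zero.mp h10)
    refine ⟨a, h8, ?_⟩
    have e := hXZ
    rw [← h8] at e
    exact add_left_cancel e
  -- facts about φ, hFn, gFn
  have phi_tau : ∀ x : 𝓧, φ (τ x) = φ x := by
    intro x
    obtain ⟨s, hs⟩ := hsys.tau_orbit x
    rw [hs, hφ]
  have inf_lt_top : (⨅ z, hFn z) < ⊤ := by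
    obtain ⟨x, hx⟩ := hproper
    refine lt_of_le_of_lt (iInf_le _ x) ?_
    simp only [hhFn]
    exact ereal_sub_lt_top hx _
  have memh_iff : ∀ z : 𝓧, z ∈ ArgminE hFn ↔ hFn z = ⨅ y, hFn y := by
    intro z
    constructor
    · intro h; exact h.2
    · intro h; exact ⟨inf_lt_top, h⟩
  have inf_eq : (⨅ W, gFn W) = ⨅ z, hFn z := by
    apply le_antisymm
    · refine le_iInf fun z => ?_
      obtain ⟨b, hb⟩ := hsys.exists_decomp Y
      have hval : gFn (Λ b z) = hFn z := by
        simp only [hgFn, hhFn]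
        rw [hsys.gamma_lambda, phi_tau]
        have hiz : ⟪Λ b z, Y⟫_ℝ = ⟪z, γ Y⟫_ℝ := by
          conv_lhs => rw [hb]
          exact lam_inner b z (γ Y)
        rw [hiz]
      calc (⨅ W, gFn W) ≤ gFn (Λ b z) := iInf_le _ _
      _ = hFn z := hval
    · refine le_iInf fun W => ?_
      have h1 : hFn (γ W) ≤ gFn W := by
        simp only [hhFn, hgFn]
        exact ereal_sub_le_sub_right (hsys.inner_le W Y)
      calc (⨅ z, hFn z) ≤ hFn (γ W) := iInf_le _ _
      _ ≤ gFn W := h1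
  have memg_iff : ∀ W : 𝓗, W ∈ ArgminE gFn ↔ gFn W = ⨅ z, hFn z := by
    intro W
    constructor
    · intro h; rw [← inf_eq]; exact h.2
    · intro h; exact ⟨by rw [inf_eq]; exact inf_lt_top, by rw [inf_eq]; exact h⟩
  have hFn_ne_bot : ∀ z : 𝓧, hFn z ≠ ⊥ := by
    intro z
    simp only [hhFn]
    exact ereal_sub_ne_bot (hbot z) _
  have phi_top_of_mem : ∀ z : 𝓧, z ∈ ArgminE hFn → φ z ≠ ⊤ := by
    intro z hz htop
    have h1 : hFn z = ⊤ := by simp only [hhFn, htop]; exact EReal.top_sub_coe _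
    have h2 := (memh_iff z).1 hz
    rw [h1] at h2
    exact inf_lt_top.ne' h2
  have tilt_le : ∀ z : 𝓧, ⟪z, γ Y⟫_ℝ ≤ ⟪τ z, γ Y⟫_ℝ := by
    intro z
    have h := inner_le_tau z (γ Y)
    rwa [tau_gamma Y] at h
  have tau_mem : ∀ z : 𝓧, z ∈ ArgminE hFn →
      τ z ∈ ArgminE hFn ∧ ⟪τ z, γ Y⟫_ℝ = ⟪z, γ Y⟫_ℝ := by
    intro z hz
    have hzv : hFn z = ⨅ y, hFn y := (memh_iff z).1 hz
    have hfb : φ z ≠ ⊥ := hbot z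
    have hft : φ z ≠ ⊤ := phi_top_of_mem z hz
    have hle : ⟪τ z, γ Y⟫_ℝ ≤ ⟪z, γ Y⟫_ℝ := by
      have hge : (⨅ y, hFn y) ≤ hFn (τ z) := iInf_le _ _
      rw [← hzv] at hge
      have hft2 : hFn (τ z) = φ z - ((⟪τ z, γ Y⟫_ℝ : ℝ) : EReal) := by
        simp only [hhFn]; rw [phi_tau]
      rw [hft2] at hge
      simp only [hhFn] at hge
      exact ereal_sub_le_cancel hfb hft hge
    have heqv : ⟪τ z, γ Y⟫_ℝ = ⟪z, γ Y⟫_ℝ := le_antisymm hle (tilt_le z)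
    have hmem : hFn (τ z) = ⨅ y, hFn y := by
      have h : hFn (τ z) = hFn z := by
        simp only [hhFn]
        rw [phi_tau, heqv]
      rw [h, hzv]
    exact ⟨(memh_iff _).2 hmem, heqv⟩
  have g_sub : ∀ W : 𝓗, W ∈ ArgminE gFn →
      γ W ∈ ArgminE hFn ∧ ⟪W, Y⟫_ℝ = ⟪γ W, γ Y⟫_ℝ := by
    intro W hW
    have hgv : gFn W = ⨅ z, hFn z := (memg_iff W).1 hW
    have h2 : (⨅ z, hFn z) ≤ hFn (γ W) := iInf_le _ _
    have h1 : hFn (γ W) ≤ gFn W := by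
      simp only [hhFn, hgFn]
      exact ereal_sub_le_sub_right (hsys.inner_le W Y)
    have hmem : hFn (γ W) = ⨅ z, hFn z := le_antisymm (by rw [← hgv]; exact h1) h2
    have hmem' : γ W ∈ ArgminE hFn := (memh_iff _).2 hmem
    have hfb : φ (γ W) ≠ ⊥ := hbot _
    have hft : φ (γ W) ≠ ⊤ := phi_top_of_mem _ hmem'
    have heq2 : gFn W = hFn (γ W) := by rw [hgv, hmem]
    have hinner : ⟪W, Y⟫_ℝ = ⟪γ W, γ Y⟫_ℝ := by
      simp only [hgFn, hhFn] at heq2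
      have hle1 := ereal_sub_le_cancel hfb hft heq2.le
      have hle2 := ereal_sub_le_cancel hfb hft heq2.ge
      linarith
    exact ⟨hmem', hinner⟩
  -- Part (i)
  have part1 : ArgminE gFn = {W : 𝓗 | ∃ x ∈ ArgminE hFn, ∃ b : A, Y = Λ b (γ Y) ∧ W = Λ b x} := by
    ext W
    constructor
    · intro hW
      obtain ⟨hγ, heqi⟩ := g_sub W hW
      obtain ⟨a, ha1, ha2⟩ := simul W Y heqi
      exact ⟨γ W, hγ, a, ha2, ha1⟩
    · rintro ⟨x, hx, b, hb, rfl⟩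
      rw [memg_iff]
      have hval : gFn (Λ b x) = hFn x := by
        simp only [hgFn, hhFn]
        rw [hsys.gamma_lambda, phi_tau]
        have hiz : ⟪Λ b x, Y⟫_ℝ = ⟪x, γ Y⟫_ℝ := by
          conv_lhs => rw [hb]
          exact lam_inner b x (γ Y)
        rw [hiz]
      rw [hval]
      exact (memh_iff x).1 hx
  -- keystone lemma for the hard directions
  have keystone : Convex ℝ (ArgminE hFn) → ∀ W₁ W₂ : 𝓗, W₁ ∈ ArgminE gFn → W₂ ∈ ArgminE gFn →
      ∀ α β : ℝ, 0 ≤ α → 0 ≤ β → α + β = 1 →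
      γ (α • W₁ + β • W₂) ∈ ArgminE hFn ∧ (α • W₁ + β • W₂) ∈ ArgminE gFn := by
    intro hconv W₁ W₂ hW₁ hW₂ α β hα hβ hαβ
    obtain ⟨hx₁, he₁⟩ := g_sub W₁ hW₁
    obtain ⟨hx₂, he₂⟩ := g_sub W₂ hW₂
    set Wm := α • W₁ + β • W₂ with hWm
    set xm := α • γ W₁ + β • γ W₂ with hxm
    have hxmmem : xm ∈ ArgminE hFn := hconv hx₁ hx₂ hα hβ hαβ
    obtain ⟨d, hd⟩ := hsys.exists_decomp Wm
    have hWY : ⟪Wm, Y⟫_ℝ = ⟪xm, γ Y⟫_ℝ := by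
      simp only [hWm, hxm]
      rw [inner_add_left, inner_add_left, real_inner_smul_left, real_inner_smul_left,
        real_inner_smul_left, real_inner_smul_left, he₁, he₂]
    have key_le : ∀ z : 𝓧, τ z = z →
        ⟪γ Wm, z⟫_ℝ ≤ α * ⟪γ W₁, z⟫_ℝ + β * ⟪γ W₂, z⟫_ℝ := by
      intro z hz
      have h0 : ⟪γ Wm, z⟫_ℝ = ⟪Wm, Λ d z⟫_ℝ := by
        conv_lhs => rw [← lam_inner d (γ Wm) z]
        rw [← hd]
      have h1 : ⟪W₁, Λ d z⟫_ℝ ≤ ⟪γ W₁, z⟫_ℝ := by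
        have h := hsys.inner_le W₁ (Λ d z)
        rwa [hsys.gamma_lambda, hz] at h
      have h2 : ⟪W₂, Λ d z⟫_ℝ ≤ ⟪γ W₂, z⟫_ℝ := by
        have h := hsys.inner_le W₂ (Λ d z)
        rwa [hsys.gamma_lambda, hz] at h
      rw [h0, hWm, inner_add_left, real_inner_smul_left, real_inner_smul_left]
      have hm1 := mul_le_mul_of_nonneg_left h1 hα
      have hm2 := mul_le_mul_of_nonneg_left h2 hβ
      linarith
    have hxmv : ⟪xm, γ Y⟫_ℝ = α * ⟪γ W₁, γ Y⟫_ℝ + β * ⟪γ W₂, γ Y⟫_ℝ := by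
      simp only [hxm]
      rw [inner_add_left, real_inner_smul_left, real_inner_smul_left]
    have tilt_eq : ⟪γ Wm, γ Y⟫_ℝ = ⟪xm, γ Y⟫_ℝ := by
      have hub := key_le (γ Y) (tau_gamma Y)
      have hlb : ⟪Wm, Y⟫_ℝ ≤ ⟪γ Wm, γ Y⟫_ℝ := hsys.inner_le _ _
      linarith [hWY, hxmv]
    -- γ Wm lies in the convex hull of the orbit of xm
    have hwC : γ Wm ∈ convexHull ℝ {y : 𝓧 | τ y = τ xm} := by
      by_contra hnot
      have hcpt : IsCompact (convexHull ℝ {y : 𝓧 | τ y = τ xm}) :=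
        isCompact_convexHull_aux (orbit_cpt xm)
      obtain ⟨f, u0, hfu, huf⟩ := geometric_hahn_banach_closed_point
        (convex_convexHull ℝ _) hcpt.isClosed hnot
      set c := (InnerProductSpace.toDual ℝ 𝓧).symm f with hc
      have hfc : ∀ y : 𝓧, ⟪c, y⟫_ℝ = f y := by
        intro y
        rw [hc]
        exact InnerProductSpace.toDual_symm_apply
      obtain ⟨s, hs⟩ := hsys.tau_orbit c
      have hp : (s⁻¹ • xm : 𝓧) ∈ {y : 𝓧 | τ y = τ xm} := hsys.tau_smul s⁻¹ xm
      have hb1 : ⟪γ Wm, c⟫_ℝ ≤ ⟪γ Wm, τ c⟫_ℝ := by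
        have h := inner_le_tau c (γ Wm)
        rw [tau_gamma Wm] at h
        have hc1 : ⟪γ Wm, c⟫_ℝ = ⟪c, γ Wm⟫_ℝ := real_inner_comm _ _
        have hc2 : ⟪γ Wm, τ c⟫_ℝ = ⟪τ c, γ Wm⟫_ℝ := real_inner_comm _ _
        linarith
      have hb2 := key_le (τ c) (tau_tau c)
      have hb3 : α * ⟪γ W₁, τ c⟫_ℝ + β * ⟪γ W₂, τ c⟫_ℝ = ⟪xm, τ c⟫_ℝ := by
        simp only [hxm]
        rw [inner_add_left, real_inner_smul_left, real_inner_smul_left]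
      have hb4 : ⟪xm, τ c⟫_ℝ = ⟪s⁻¹ • xm, c⟫_ℝ := by
        rw [hs]
        exact sm_inner' s xm c
      have hchain : f (γ Wm) ≤ f (s⁻¹ • xm) := by
        rw [← hfc, ← hfc]
        have hc1 : ⟪c, γ Wm⟫_ℝ = ⟪γ Wm, c⟫_ℝ := real_inner_comm _ _
        have hc2 : ⟪c, s⁻¹ • xm⟫_ℝ = ⟪s⁻¹ • xm, c⟫_ℝ := real_inner_comm _ _
        linarith
      have hlt := hfu _ (subset_convexHull ℝ _ hp)
      linarith
    rw [convexHull_eq] at hwC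
    obtain ⟨ι, t, wt, zt, hw0, hw1, hzD, hcm⟩ := hwC
    rw [Finset.centerMass_eq_of_sum_1 _ _ hw1] at hcm
    have horb_tilt : ∀ y : 𝓧, τ y = τ xm → ⟪y, γ Y⟫_ℝ ≤ ⟪xm, γ Y⟫_ℝ := by
      intro y hy
      have h1 := tilt_le y
      rw [hy] at h1
      have h2 := (tau_mem xm hxmmem).2
      linarith
    have hsum_tilt : ∑ i ∈ t, wt i * ⟪zt i, γ Y⟫_ℝ = ⟪xm, γ Y⟫_ℝ := by
      have h : ⟪γ Wm, γ Y⟫_ℝ = ∑ i ∈ t, wt i * ⟪zt i, γ Y⟫_ℝ := by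
        rw [← hcm, sum_inner]
        simp only [real_inner_smul_left]
      rw [← h, tilt_eq]
    have hterm_le : ∀ i ∈ t, wt i * ⟪zt i, γ Y⟫_ℝ ≤ wt i * ⟪xm, γ Y⟫_ℝ :=
      fun i hi => mul_le_mul_of_nonneg_left (horb_tilt _ (hzD i hi)) (hw0 i hi)
    have hsum_eq : ∑ i ∈ t, wt i * ⟪xm, γ Y⟫_ℝ = ⟪xm, γ Y⟫_ℝ := by
      rw [← Finset.sum_mul, hw1, one_mul]
    have htilt' : ∀ i ∈ t, wt i ≠ 0 → ⟪zt i, γ Y⟫_ℝ = ⟪xm, γ Y⟫_ℝ := by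
      intro i hi hne
      by_contra hne2
      have hlt : wt i * ⟪zt i, γ Y⟫_ℝ < wt i * ⟪xm, γ Y⟫_ℝ :=
        mul_lt_mul_of_pos_left (lt_of_le_of_ne (horb_tilt _ (hzD i hi)) hne2)
          ((hw0 i hi).lt_of_ne (Ne.symm hne))
      have hslt := Finset.sum_lt_sum hterm_le ⟨i, hi, hlt⟩
      rw [hsum_tilt, hsum_eq] at hslt
      exact lt_irrefl _ hslt
    set t' := t.filter (fun i => wt i ≠ 0) with ht'
    have hsub' : t' ⊆ t := Finset.filter_subset _ _
    have hw1' : ∑ i ∈ t', wt i = 1 := by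
      rw [ht', Finset.sum_filter_of_ne (fun i _ h => h)]
      exact hw1
    have hcomb' : ∑ i ∈ t', wt i • zt i = γ Wm := by
      rw [ht', Finset.sum_filter_of_ne]
      · exact hcm
      · intro i _ hne0 h0
        exact hne0 (by rw [h0, zero_smul])
    have hmem' : ∀ i ∈ t', zt i ∈ ArgminE hFn := by
      intro i hi
      have hiD := hzD i (hsub' hi)
      obtain ⟨s, hsi⟩ := (orbit_char xm (zt i)).1 hiD
      have hwne : wt i ≠ 0 := (Finset.mem_filter.1 hi).2
      have hφeq : φ (zt i) = φ xm := by rw [hsi, hφ]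
      have hfeq : hFn (zt i) = hFn xm := by
        simp only [hhFn]
        rw [hφeq, htilt' i (hsub' hi) hwne]
      rw [memh_iff, hfeq]
      exact (memh_iff xm).1 hxmmem
    have hwS₀ : γ Wm ∈ ArgminE hFn := by
      rw [← hcomb']
      exact hconv.sum_mem (fun i hi => hw0 i (hsub' hi)) hw1' hmem'
    refine ⟨hwS₀, ?_⟩
    rw [memg_iff]
    have hval : gFn Wm = hFn (γ Wm) := by
      simp only [hgFn, hhFn]
      rw [hWY, ← tilt_eq]
    rw [hval]
    exact (memh_iff _).1 hwS₀
  -- assemble the three statements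
  refine ⟨part1, ⟨?_, ?_⟩, ⟨?_, ?_⟩⟩
  · -- 𝔖 convex → S₀ convex
    intro hconvg
    intro x₁ hx₁ x₂ hx₂ α β hα hβ hαβ
    obtain ⟨b, hb⟩ := hsys.exists_decomp Y
    have hW₁ : Λ b x₁ ∈ ArgminE gFn := by
      rw [part1]; exact ⟨x₁, hx₁, b, hb, rfl⟩
    have hW₂ : Λ b x₂ ∈ ArgminE gFn := by
      rw [part1]; exact ⟨x₂, hx₂, b, hb, rfl⟩
    have hmix : α • Λ b x₁ + β • Λ b x₂ ∈ ArgminE gFn := hconvg hW₁ hW₂ hα hβ hαβ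
    have hmix' : Λ b (α • x₁ + β • x₂) ∈ ArgminE gFn := by
      rw [map_add, map_smul, map_smul]; exact hmix
    obtain ⟨hmem, heq⟩ := g_sub _ hmix'
    rw [hsys.gamma_lambda] at hmem heq
    have h1 : ⟪Λ b (α • x₁ + β • x₂), Y⟫_ℝ = ⟪α • x₁ + β • x₂, γ Y⟫_ℝ := by
      conv_lhs => rw [hb]
      exact lam_inner b _ (γ Y)
    rw [h1] at heq
    rw [memh_iff]
    have hfeq : hFn (α • x₁ + β • x₂) = hFn (τ (α • x₁ + β • x₂)) := by
      simp only [hhFn]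
      rw [phi_tau, heq]
    rw [hfeq]
    exact (memh_iff _).1 hmem
  · -- S₀ convex → 𝔖 convex
    intro hconvh
    intro W₁ hW₁ W₂ hW₂ α β hα hβ hαβ
    exact (keystone hconvh W₁ W₂ hW₁ hW₂ α β hα hβ hαβ).2
  · -- 𝔖 singleton → S₀ singleton
    rintro ⟨W₀, hW₀⟩
    have hW₀mem : W₀ ∈ ArgminE gFn := by rw [hW₀]; exact Set.mem_singleton _
    have hx := (g_sub W₀ hW₀mem).1
    refine ⟨γ W₀, Set.eq_singleton_iff_unique_mem.2 ⟨hx, ?_⟩⟩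
    intro x hxm
    obtain ⟨b, hb⟩ := hsys.exists_decomp Y
    have h1 : Λ b x ∈ ArgminE gFn := by rw [part1]; exact ⟨x, hxm, b, hb, rfl⟩
    have h2 : Λ b (γ W₀) ∈ ArgminE gFn := by rw [part1]; exact ⟨γ W₀, hx, b, hb, rfl⟩
    rw [hW₀, Set.mem_singleton_iff] at h1 h2
    have h3 : Λ b x = Λ b (γ W₀) := by rw [h1, h2]
    have h4 : ‖x - γ W₀‖ = 0 := by
      have h5 := hsys.norm_lambda b (x - γ W₀)
      rw [map_sub, h3, sub_self, norm_zero] at h5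
      exact h5.symm
    exact sub_eq_zero.mp (norm_eq_zero.mp h4)
  · -- S₀ singleton → 𝔖 singleton
    rintro ⟨x₀, hx₀⟩
    have hx₀mem : x₀ ∈ ArgminE hFn := by rw [hx₀]; exact Set.mem_singleton _
    obtain ⟨b, hb⟩ := hsys.exists_decomp Y
    have hW₀mem : Λ b x₀ ∈ ArgminE gFn := by
      rw [part1]; exact ⟨x₀, hx₀mem, b, hb, rfl⟩
    have hconv : Convex ℝ (ArgminE hFn) := by rw [hx₀]; exact convex_singleton x₀
    have pair : ∀ U₁ U₂ : 𝓗, U₁ ∈ ArgminE gFn → U₂ ∈ ArgminE gFn → U₁ = U₂ := by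
      intro U₁ U₂ hU₁ hU₂
      have hk := keystone hconv U₁ U₂ hU₁ hU₂ (1/2) (1/2) (by norm_num) (by norm_num)
        (by norm_num)
      have hmid : γ ((1/2 : ℝ) • U₁ + (1/2 : ℝ) • U₂) = x₀ := by
        have h := hk.1
        rw [hx₀, Set.mem_singleton_iff] at h
        exact h
      have hγ1 : γ U₁ = x₀ := by
        have h := (g_sub U₁ hU₁).1
        rw [hx₀, Set.mem_singleton_iff] at h
        exact h
      have hγ2 : γ U₂ = x₀ := by
        have h := (g_sub U₂ hU₂).1
        rw [hx₀, Set.mem_singleton_iff] at h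
        exact h
      have hU₁n : ‖U₁‖ = ‖x₀‖ := by rw [← hγ1, gamma_norm]
      have hU₂n : ‖U₂‖ = ‖x₀‖ := by rw [← hγ2, gamma_norm]
      have hmidn : ‖(1/2 : ℝ) • U₁ + (1/2 : ℝ) • U₂‖ = ‖x₀‖ := by
        rw [← hmid, gamma_norm]
      have hsumn : ‖U₁ + U₂‖ = 2 * ‖x₀‖ := by
        have hsm : (1/2 : ℝ) • U₁ + (1/2 : ℝ) • U₂ = (1/2 : ℝ) • (U₁ + U₂) := by
          rw [smul_add]
        rw [hsm, norm_smul] at hmidn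
        simp only [Real.norm_eq_abs] at hmidn
        rw [abs_of_pos (by norm_num : (0:ℝ) < 1/2)] at hmidn
        linarith
      have hpar := parallelogram_law_with_norm ℝ U₁ U₂
      rw [hU₁n, hU₂n, hsumn] at hpar
      have hz : ‖U₁ - U₂‖ * ‖U₁ - U₂‖ = 0 := by nlinarith
      have hz2 : ‖U₁ - U₂‖ = 0 := by nlinarith [norm_nonneg (U₁ - U₂)]
      exact sub_eq_zero.mp (norm_eq_zero.mp hz2)
    exact ⟨Λ b x₀, Set.eq_singleton_iff_unique_mem.2
      ⟨hW₀mem, fun W hW => pair W (Λ b x₀) hW hW₀mem⟩⟩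
end

section
/- (Conjugate of a spectral function.) Let 𝔥 be a Euclidean space with spectral decomposition system (𝒳, S, γ, (Λ_a)_{a∈A}), and let φ : 𝒳 → (−∞, +∞] be proper (not identically +∞) and S-invariant (φ(s • x) = φ(x) for all s ∈ S, x ∈ 𝒳). Then (φ ∘ γ)* = φ* ∘ γ, where for a proper function f on a Euclidean space 𝓗, its Fenchel conjugate is f*(y) = sup_{x ∈ 𝓗} ( ⟨x, y⟩ − f(x) ) with values in [−∞, +∞]. -/
open scoped InnerProductSpace

variable {𝓗 𝓧 : Type*} [NormedAddCommGroup 𝓗] [InnerProductSpace ℝ 𝓗]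
  [FiniteDimensional ℝ 𝓗] [NormedAddCommGroup 𝓧] [InnerProductSpace ℝ 𝓧]
  [FiniteDimensional ℝ 𝓧] {S : Type*} [Group S] [MulAction S 𝓧]
  {A : Type*} [Nonempty A]

/-- The Fenchel conjugate of an extended-real-valued function on a Euclidean space. -/
noncomputable def fenchelConjugate {V : Type*} [NormedAddCommGroup V]
    [InnerProductSpace ℝ V] (f : V → EReal) : V → EReal :=
  fun y => ⨆ x : V, (((⟪x, y⟫_ℝ : ℝ) : EReal) - f x)

/-- Conjugate of a spectral function. -/
theorem spectral_function_fenchelConjugate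
    (γ : 𝓗 → 𝓧) (Λ : A → 𝓧 →ₗ[ℝ] 𝓗) (τ : 𝓧 → 𝓧)
    (hsys : SpectralDecompositionSystem 𝓗 𝓧 S γ Λ τ)
    (φ : 𝓧 → EReal) (hproper : ∃ x, φ x ≠ ⊤) (hbot : ∀ x, φ x ≠ ⊥)
    (hφ : ∀ (s : S) (x : 𝓧), φ (s • x) = φ x) :
    fenchelConjugate (fun W => φ (γ W)) = fun Y => fenchelConjugate φ (γ Y) := by
  funext Y
  unfold fenchelConjugate
  apply le_antisymm
  · apply iSup_le
    intro W
    have h1 : ⟪W, Y⟫_ℝ ≤ ⟪γ W, γ Y⟫_ℝ := hsys.inner_le W Y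
    calc ((⟪W, Y⟫_ℝ : ℝ) : EReal) - φ (γ W)
        ≤ ((⟪γ W, γ Y⟫_ℝ : ℝ) : EReal) - φ (γ W) :=
          EReal.sub_le_sub (by exact_mod_cast h1) le_rfl
      _ ≤ ⨆ x : 𝓧, (((⟪x, γ Y⟫_ℝ : ℝ) : EReal) - φ x) :=
          le_iSup (fun x : 𝓧 => (((⟪x, γ Y⟫_ℝ : ℝ) : EReal) - φ x)) (γ W)
  · apply iSup_le
    intro x
    obtain ⟨a, ha⟩ := hsys.exists_decomp Y
    let L : 𝓧 →ₗᵢ[ℝ] 𝓗 := ⟨Λ a, hsys.norm_lambda a⟩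
    have hin : ⟪Λ a x, Y⟫_ℝ = ⟪x, γ Y⟫_ℝ := by
      conv_lhs => rw [ha]
      exact L.inner_map_map x (γ Y)
    have hφeq : φ (γ (Λ a x)) = φ x := by
      rw [hsys.gamma_lambda]
      obtain ⟨s, hs⟩ := hsys.tau_orbit x
      rw [hs, hφ]
    have : (((⟪x, γ Y⟫_ℝ : ℝ) : EReal) - φ x)
        = (((⟪Λ a x, Y⟫_ℝ : ℝ) : EReal) - φ (γ (Λ a x))) := by
      rw [hin, hφeq]
    rw [this]
    exact le_iSup (fun W : 𝓗 => (((⟪W, Y⟫_ℝ : ℝ) : EReal) - φ (γ W))) (Λ a x)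
end
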